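/- arXiv:1310.3866 — 4 statements merged into one kernel-verified Lean document; each statement's English description precedes it below -/
import Mathlib

section
/- Let $p \in [1,\infty)$, $\delta > 0$, and let $u : [0,\infty) \to \mathbb{R}$ be locally absolutely continuous. Then $\left(\int_0^\infty e^{-\delta t} |u(t) - u(0)|^p \, dt\right)^{1/p} \le \frac{p}{\delta} \left(\int_0^\infty e^{-\delta t} |\dot{u}(t)|^p \, dt\right)^{1/p}$. -/
open MeasureTheory Set Real
open scoped ENNReal

-- aux1: exponential tail integral
lemma lint_exp_Ici {β : ℝ} (hβ : 0 < β) (s : ℝ) :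
    ∫⁻ t in Ici s, ENNReal.ofReal (Real.exp (-β * t)) =
      ENNReal.ofReal (Real.exp (-β * s) / β) := by
  rw [← Measure.restrict_congr_set Ioi_ae_eq_Ici]
  rw [← ofReal_integral_eq_lintegral_ofReal (exp_neg_integrableOn_Ioi s hβ)
    (Filter.Eventually.of_forall fun x => (exp_pos _).le)]
  congr 1
  have := integral_comp_mul_left_Ioi (fun x => Real.exp (-x)) s hβ
  simp only [← neg_mul, smul_eq_mul] at this
  rw [this, integral_exp_neg_Ioi]
  rw [show -(β*s) = -s*β by ring]
  ring_nf

-- aux2: exponential integral on Ioc, upper bound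
lemma lint_exp_Ioc {β : ℝ} (hβ : 0 < β) {t : ℝ} (ht : 0 < t) :
    ∫⁻ s in Ioc 0 t, ENNReal.ofReal (Real.exp (β * s)) ≤
      ENNReal.ofReal (Real.exp (β * t) / β) := by
  have hint : IntegrableOn (fun s => Real.exp (β * s)) (Ioc 0 t) :=
    (Real.continuous_exp.comp (continuous_const.mul continuous_id)).integrableOn_Ioc
  rw [← ofReal_integral_eq_lintegral_ofReal hint
    (Filter.Eventually.of_forall fun x => (exp_pos _).le)]
  apply ENNReal.ofReal_le_ofReal
  have : (∫ s in Ioc 0 t, Real.exp (β * s)) = ∫ s in (0:ℝ)..t, Real.exp (β * s) := by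
    rw [intervalIntegral.integral_of_le ht.le]
  rw [this]
  have h2 := intervalIntegral.integral_comp_mul_left (a := (0:ℝ)) (b := t)
    (fun x => Real.exp x) hβ.ne'
  rw [h2]
  simp only [mul_zero, smul_eq_mul, integral_exp, Real.exp_zero]
  rw [div_eq_inv_mul]
  have h3 := Real.exp_pos (β * t)
  have h4 := inv_pos.mpr hβ
  nlinarith

-- aux3: Fubini
lemma fubini_aux {β : ℝ} (hβ : 0 < β) (H : ℝ → ℝ≥0∞) (hH : Measurable H) :
    ∫⁻ t in Ioi (0:ℝ), ENNReal.ofReal (Real.exp (-β * t)) * ∫⁻ s in Ioc 0 t, H s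
      = ∫⁻ s in Ioi (0:ℝ), H s * ENNReal.ofReal (Real.exp (-β * s) / β) := by
  set f : ℝ → ℝ → ℝ≥0∞ := fun t s =>
    ENNReal.ofReal (Real.exp (-β * t)) * (Iic t).indicator H s with hf
  have hmeas : AEMeasurable (Function.uncurry f)
      ((volume.restrict (Ioi (0:ℝ))).prod (volume.restrict (Ioi (0:ℝ)))) := by
    apply Measurable.aemeasurable
    have h1 : Measurable fun q : ℝ × ℝ => ENNReal.ofReal (Real.exp (-β * q.1)) :=
      ENNReal.measurable_ofReal.comp (Real.continuous_exp.measurable.comp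
        (measurable_const.mul measurable_fst))
    have h2 : (fun q : ℝ × ℝ => (Iic q.1).indicator H q.2) =
        {q : ℝ × ℝ | q.2 ≤ q.1}.indicator (fun q => H q.2) := by
      ext q
      by_cases h : q.2 ≤ q.1 <;> simp [Set.indicator, h]
    have h3 : Measurable fun q : ℝ × ℝ => (Iic q.1).indicator H q.2 := by
      rw [h2]
      exact (hH.comp measurable_snd).indicator (measurableSet_le measurable_snd measurable_fst)
    exact h1.mul h3
  have key := lintegral_lintegral_swap hmeas
  have hL : ∀ t : ℝ, (∫⁻ s, f t s ∂(volume.restrict (Ioi 0)))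
      = ENNReal.ofReal (Real.exp (-β * t)) * ∫⁻ s in Ioc 0 t, H s := by
    intro t
    rw [hf]
    simp only
    rw [lintegral_const_mul _ (hH.indicator measurableSet_Iic),
      lintegral_indicator measurableSet_Iic,
      Measure.restrict_restrict measurableSet_Iic,
      show Iic t ∩ Ioi (0:ℝ) = Ioc 0 t from by ext x; simp [and_comm]]
  have hR : ∀ᵐ s ∂(volume.restrict (Ioi (0:ℝ))),
      (∫⁻ t, f t s ∂(volume.restrict (Ioi 0)))
        = H s * ENNReal.ofReal (Real.exp (-β * s) / β) := by
    filter_upwards [ae_restrict_mem measurableSet_Ioi] with s hs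
    have : ∀ t : ℝ, f t s = H s * (Ici s).indicator
        (fun t => ENNReal.ofReal (Real.exp (-β * t))) t := by
      intro t
      rw [hf]
      simp only [Set.indicator]
      by_cases h : s ≤ t <;> simp [h, mul_comm]
    simp_rw [this]
    have hm : Measurable ((Ici s).indicator (fun t => ENNReal.ofReal (Real.exp (-β * t)))) :=
      Measurable.indicator (by fun_prop) measurableSet_Ici
    rw [lintegral_const_mul _ hm,
      lintegral_indicator measurableSet_Ici,
      Measure.restrict_restrict measurableSet_Ici]
    have hset : Ici s ∩ Ioi (0:ℝ) = Ici s := by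
      apply inter_eq_self_of_subset_left
      exact fun x hx => show (0:ℝ) < x from lt_of_lt_of_le hs hx
    rw [hset, lint_exp_Ici hβ]
  calc ∫⁻ t in Ioi (0:ℝ), ENNReal.ofReal (Real.exp (-β * t)) * ∫⁻ s in Ioc 0 t, H s
      = ∫⁻ t in Ioi (0:ℝ), ∫⁻ s in Ioi (0:ℝ), f t s := by
        apply lintegral_congr; intro t; exact (hL t).symm
    _ = ∫⁻ s in Ioi (0:ℝ), ∫⁻ t in Ioi (0:ℝ), f t s := key
    _ = ∫⁻ s in Ioi (0:ℝ), H s * ENNReal.ofReal (Real.exp (-β * s) / β) :=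
        lintegral_congr_ae hR

-- aux4: pointwise Hölder bound
lemma holder_aux {p δ : ℝ} (hp : 1 ≤ p) (hδ : 0 < δ) (G : ℝ → ℝ≥0∞) (hG : Measurable G)
    {t : ℝ} (ht : 0 < t) :
    (∫⁻ s in Ioc 0 t, G s) ^ p ≤
      ENNReal.ofReal (Real.exp (δ / p * t) / (δ / p)) ^ (p - 1) *
        ∫⁻ s in Ioc 0 t, G s ^ p * ENNReal.ofReal (Real.exp ((δ / p - δ) * s)) := by
  have hp0 : (0:ℝ) < p := lt_of_lt_of_le zero_lt_one hp
  rcases eq_or_lt_of_le hp with hp1 | hlt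
  · subst hp1
    simp
  -- p > 1
  set β := δ / p with hβdef
  have hβ : 0 < β := div_pos hδ hp0
  have hq := Real.HolderConjugate.conjExponent hlt
  set q := Real.conjExponent p with hqdef
  have hq1 : 0 < q := hq.symm.pos
  set F : ℝ → ℝ≥0∞ := fun s => G s * ENNReal.ofReal (Real.exp ((β - δ) * s / p)) with hF
  set g : ℝ → ℝ≥0∞ := fun s => ENNReal.ofReal (Real.exp ((δ - β) * s / p)) with hg
  have hFg : ∀ s, F s * g s = G s := by
    intro s
    rw [hF, hg]
    simp only
    rw [mul_assoc, ← ENNReal.ofReal_mul (Real.exp_nonneg _), ← Real.exp_add]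
    rw [show (β - δ) * s / p + (δ - β) * s / p = 0 by ring, Real.exp_zero,
      ENNReal.ofReal_one, mul_one]
  have hFmeas : AEMeasurable F (volume.restrict (Ioc 0 t)) := by
    apply Measurable.aemeasurable; fun_prop
  have hgmeas : AEMeasurable g (volume.restrict (Ioc 0 t)) := by
    apply Measurable.aemeasurable; fun_prop
  have hhold := ENNReal.lintegral_mul_le_Lp_mul_Lq (volume.restrict (Ioc 0 t)) hq hFmeas hgmeas
  have hFG : (∫⁻ s in Ioc 0 t, (F * g) s) = ∫⁻ s in Ioc 0 t, G s := by
    apply lintegral_congr; intro s; exact hFg s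
  rw [hFG] at hhold
  -- compute F^p
  have hFp : ∀ s, F s ^ p = G s ^ p * ENNReal.ofReal (Real.exp ((β - δ) * s)) := by
    intro s
    rw [hF]
    simp only
    rw [ENNReal.mul_rpow_of_nonneg _ _ hp0.le,
      ENNReal.ofReal_rpow_of_nonneg (Real.exp_nonneg _) hp0.le,
      ← Real.exp_mul, show (β - δ) * s / p * p = (β - δ) * s by field_simp]
  -- compute g^q
  have hgq : ∀ s, g s ^ q = ENNReal.ofReal (Real.exp (β * s)) := by
    intro s
    rw [hg]
    simp only
    rw [ENNReal.ofReal_rpow_of_nonneg (Real.exp_nonneg _) hq1.le, ← Real.exp_mul]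
    congr 2
    have hq2 : q = p / (p - 1) := hq.conjugate_eq
    have hps : p - 1 ≠ 0 := ne_of_gt (sub_pos.2 hlt)
    rw [hq2, hβdef]
    field_simp
  simp_rw [hFp, hgq] at hhold
  -- bound the g-integral
  have hgbound : (∫⁻ s in Ioc 0 t, ENNReal.ofReal (Real.exp (β * s))) ^ (1/q) ≤
      ENNReal.ofReal (Real.exp (β * t) / β) ^ (1/q) :=
    ENNReal.rpow_le_rpow (lint_exp_Ioc hβ ht) (by positivity)
  have hmain : (∫⁻ s in Ioc 0 t, G s) ≤
      (∫⁻ s in Ioc 0 t, G s ^ p * ENNReal.ofReal (Real.exp ((β - δ) * s))) ^ (1/p) *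
        ENNReal.ofReal (Real.exp (β * t) / β) ^ (1/q) :=
    le_trans hhold (mul_le_mul_right hgbound _)
  calc (∫⁻ s in Ioc 0 t, G s) ^ p
      ≤ ((∫⁻ s in Ioc 0 t, G s ^ p * ENNReal.ofReal (Real.exp ((β - δ) * s))) ^ (1/p) *
          ENNReal.ofReal (Real.exp (β * t) / β) ^ (1/q)) ^ p :=
        ENNReal.rpow_le_rpow hmain hp0.le
    _ = ENNReal.ofReal (Real.exp (β * t) / β) ^ (p - 1) *
          ∫⁻ s in Ioc 0 t, G s ^ p * ENNReal.ofReal (Real.exp ((β - δ) * s)) := by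
        rw [ENNReal.mul_rpow_of_nonneg _ _ hp0.le, ← ENNReal.rpow_mul, ← ENNReal.rpow_mul,
          one_div_mul_cancel hp0.ne', ENNReal.rpow_one,
          show 1/q * p = p - 1 by
            rw [hq.conjugate_eq]; field_simp]
        ring



/-- Weighted Poincaré inequality: for `p ∈ [1,∞)`, `δ > 0` and a locally absolutely
continuous `u : [0,∞) → ℝ` (encoded via its a.e. derivative `u'` and the fundamental
theorem of calculus), the weighted `L^p` norm of `u - u 0` is bounded by `p/δ` times
the weighted `L^p` norm of `u'`.  Stated with lower Lebesgue integrals so that the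
inequality also covers the case where the right-hand side is infinite. -/
theorem weighted_poincare (p δ : ℝ) (hp : 1 ≤ p) (hδ : 0 < δ)
    (u u' : ℝ → ℝ)
    (hFTC : ∀ s t : ℝ, 0 ≤ s → s ≤ t →
      IntervalIntegrable u' volume s t ∧ u t - u s = ∫ r in s..t, u' r) :
    (∫⁻ t in Set.Ioi (0:ℝ), ENNReal.ofReal (Real.exp (-δ * t) * |u t - u 0| ^ p)) ^ (1/p)
      ≤ ENNReal.ofReal (p / δ) *
        (∫⁻ t in Set.Ioi (0:ℝ), ENNReal.ofReal (Real.exp (-δ * t) * |u' t| ^ p)) ^ (1/p) := by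
  have hp0 : (0:ℝ) < p := lt_of_lt_of_le zero_lt_one hp
  set β := δ / p with hβdef
  have hβ : 0 < β := div_pos hδ hp0
  have hβp : β * p = δ := div_mul_cancel₀ δ hp0.ne'
  -- measurable representative of u'
  have hmeasu' : AEStronglyMeasurable u' (volume.restrict (Ioi (0:ℝ))) := by
    have hUnion : Ioi (0:ℝ) = ⋃ n : ℕ, Ioc (0:ℝ) (n:ℝ) := by
      ext x
      simp only [mem_Ioi, mem_iUnion, mem_Ioc]
      constructor
      · intro hx
        obtain ⟨n, hn⟩ := exists_nat_ge x
        exact ⟨n, hx, hn⟩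
      · rintro ⟨n, h1, _⟩; exact h1
    rw [hUnion, aestronglyMeasurable_iUnion_iff]
    intro n
    have h1 := (hFTC 0 n le_rfl (Nat.cast_nonneg n)).1
    exact ((intervalIntegrable_iff_integrableOn_Ioc_of_le
      (Nat.cast_nonneg n)).mp h1).aestronglyMeasurable
  have hA : AEMeasurable u' (volume.restrict (Ioi (0:ℝ))) := hmeasu'.aemeasurable
  set v := hA.mk u' with hvdef
  have hvmeas : Measurable v := hA.measurable_mk
  have hvae : u' =ᵐ[volume.restrict (Ioi (0:ℝ))] v := hA.ae_eq_mk
  set G : ℝ → ℝ≥0∞ := fun s => ENNReal.ofReal |v s| with hGdef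
  have hGmeas : Measurable G := ENNReal.measurable_ofReal.comp hvmeas.abs
  set H : ℝ → ℝ≥0∞ := fun s => G s ^ p * ENNReal.ofReal (Real.exp ((β - δ) * s)) with hHdef
  have hHmeas : Measurable H := by
    apply Measurable.mul
    · exact hGmeas.pow_const p
    · fun_prop
  -- pointwise FTC bound
  have hpoint : ∀ t ∈ Ioi (0:ℝ), ENNReal.ofReal |u t - u 0| ≤ ∫⁻ s in Ioc 0 t, G s := by
    intro t ht
    obtain ⟨hInt, hEq⟩ := hFTC 0 t le_rfl (le_of_lt ht)
    have hIoc : IntegrableOn u' (Ioc 0 t) volume :=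
      (intervalIntegrable_iff_integrableOn_Ioc_of_le (le_of_lt ht)).mp hInt
    have haev : u' =ᵐ[volume.restrict (Ioc 0 t)] v :=
      ae_restrict_of_ae_restrict_of_subset Ioc_subset_Ioi_self hvae
    have hIocv : IntegrableOn v (Ioc 0 t) volume := hIoc.congr haev
    have hEq2 : u t - u 0 = ∫ s in Ioc 0 t, v s := by
      rw [hEq, intervalIntegral.integral_of_le (le_of_lt ht)]
      exact integral_congr_ae haev
    rw [hEq2]
    calc ENNReal.ofReal |∫ s in Ioc 0 t, v s|
        ≤ ENNReal.ofReal (∫ s in Ioc 0 t, |v s|) := by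
          apply ENNReal.ofReal_le_ofReal
          simpa [Real.norm_eq_abs] using
            norm_integral_le_integral_norm (μ := volume.restrict (Ioc 0 t)) v
      _ = ∫⁻ s in Ioc 0 t, G s := by
          rw [ofReal_integral_eq_lintegral_ofReal hIocv.abs
            (Filter.Eventually.of_forall fun x => abs_nonneg _)]
  -- rewrite both sides of the goal
  have hLHS : (∫⁻ t in Ioi (0:ℝ), ENNReal.ofReal (Real.exp (-δ * t) * |u t - u 0| ^ p))
      = ∫⁻ t in Ioi (0:ℝ),
          ENNReal.ofReal (Real.exp (-δ * t)) * ENNReal.ofReal |u t - u 0| ^ p := by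
    apply lintegral_congr; intro t
    rw [ENNReal.ofReal_mul (Real.exp_nonneg _),
      ← ENNReal.ofReal_rpow_of_nonneg (abs_nonneg _) hp0.le]
  have hRHS : (∫⁻ t in Ioi (0:ℝ), ENNReal.ofReal (Real.exp (-δ * t) * |u' t| ^ p))
      = ∫⁻ t in Ioi (0:ℝ), ENNReal.ofReal (Real.exp (-δ * t)) * G t ^ p := by
    apply lintegral_congr_ae
    filter_upwards [hvae] with t htv
    rw [hGdef]
    simp only
    rw [htv, ENNReal.ofReal_mul (Real.exp_nonneg _),
      ← ENNReal.ofReal_rpow_of_nonneg (abs_nonneg _) hp0.le]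
  rw [hLHS, hRHS]
  set B := ∫⁻ t in Ioi (0:ℝ), ENNReal.ofReal (Real.exp (-δ * t)) * G t ^ p with hBdef
  set c := ENNReal.ofReal β⁻¹ with hcdef
  have hc0 : c ≠ 0 := (ENNReal.ofReal_pos.mpr (inv_pos.mpr hβ)).ne'
  have hctop : c ≠ ⊤ := ENNReal.ofReal_ne_top
  -- the algebraic identity used in step 2
  have halg : ∀ t : ℝ, ENNReal.ofReal (Real.exp (-δ * t)) *
      ENNReal.ofReal (Real.exp (β * t) / β) ^ (p - 1)
      = c ^ (p - 1) * ENNReal.ofReal (Real.exp (-β * t)) := by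
    intro t
    rw [div_eq_mul_inv, ENNReal.ofReal_mul (Real.exp_nonneg _),
      ENNReal.mul_rpow_of_nonneg _ _ (sub_nonneg.mpr hp),
      ENNReal.ofReal_rpow_of_nonneg (Real.exp_nonneg _) (sub_nonneg.mpr hp),
      ← Real.exp_mul, ← hcdef]
    rw [show ENNReal.ofReal (Real.exp (-δ * t)) *
        (ENNReal.ofReal (Real.exp (β * t * (p - 1))) * c ^ (p - 1))
        = c ^ (p - 1) * (ENNReal.ofReal (Real.exp (-δ * t)) *
          ENNReal.ofReal (Real.exp (β * t * (p - 1)))) from by ring]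
    rw [← ENNReal.ofReal_mul (Real.exp_nonneg _), ← Real.exp_add,
      show -δ * t + β * t * (p - 1) = -β * t by linear_combination t * hβp]
  -- main chain of inequalities
  have hmain : (∫⁻ t in Ioi (0:ℝ),
      ENNReal.ofReal (Real.exp (-δ * t)) * ENNReal.ofReal |u t - u 0| ^ p) ≤ c ^ p * B := by
    calc (∫⁻ t in Ioi (0:ℝ),
        ENNReal.ofReal (Real.exp (-δ * t)) * ENNReal.ofReal |u t - u 0| ^ p)
        ≤ ∫⁻ t in Ioi (0:ℝ), c ^ (p - 1) *
            (ENNReal.ofReal (Real.exp (-β * t)) * ∫⁻ s in Ioc 0 t, H s) := by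
          apply lintegral_mono_ae
          filter_upwards [ae_restrict_mem measurableSet_Ioi] with t ht
          calc ENNReal.ofReal (Real.exp (-δ * t)) * ENNReal.ofReal |u t - u 0| ^ p
              ≤ ENNReal.ofReal (Real.exp (-δ * t)) * (∫⁻ s in Ioc 0 t, G s) ^ p :=
                mul_le_mul_right (ENNReal.rpow_le_rpow (hpoint t ht) hp0.le) _
            _ ≤ ENNReal.ofReal (Real.exp (-δ * t)) *
                  (ENNReal.ofReal (Real.exp (β * t) / β) ^ (p - 1) *
                    ∫⁻ s in Ioc 0 t, H s) := by
                refine mul_le_mul_right ?_ _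
                have := holder_aux hp hδ G hGmeas ht
                rw [← hβdef] at this
                exact this
            _ = c ^ (p - 1) *
                  (ENNReal.ofReal (Real.exp (-β * t)) * ∫⁻ s in Ioc 0 t, H s) := by
                rw [← mul_assoc, halg t, mul_assoc]
      _ = c ^ (p - 1) * ∫⁻ t in Ioi (0:ℝ),
            ENNReal.ofReal (Real.exp (-β * t)) * ∫⁻ s in Ioc 0 t, H s :=
          lintegral_const_mul' _ _
            (ENNReal.rpow_ne_top_of_nonneg (sub_nonneg.mpr hp) hctop)
      _ = c ^ (p - 1) * ∫⁻ s in Ioi (0:ℝ),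
            H s * ENNReal.ofReal (Real.exp (-β * s) / β) := by
          rw [fubini_aux hβ H hHmeas]
      _ = c ^ (p - 1) * (c * B) := by
          congr 1
          rw [hBdef, ← lintegral_const_mul' _ _ hctop]
          apply lintegral_congr
          intro s
          rw [hHdef]
          simp only
          rw [div_eq_mul_inv, ENNReal.ofReal_mul (Real.exp_nonneg _), ← hcdef]
          have hexp : ENNReal.ofReal (Real.exp ((β - δ) * s)) *
              ENNReal.ofReal (Real.exp (-β * s)) = ENNReal.ofReal (Real.exp (-δ * s)) := by
            rw [← ENNReal.ofReal_mul (Real.exp_nonneg _), ← Real.exp_add]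
            congr 2
            ring
          calc G s ^ p * ENNReal.ofReal (Real.exp ((β - δ) * s)) *
              (ENNReal.ofReal (Real.exp (-β * s)) * c)
              = c * ((ENNReal.ofReal (Real.exp ((β - δ) * s)) *
                  ENNReal.ofReal (Real.exp (-β * s))) * G s ^ p) := by ring
            _ = c * (ENNReal.ofReal (Real.exp (-δ * s)) * G s ^ p) := by rw [hexp]
      _ = c ^ p * B := by
          rw [← mul_assoc]
          congr 1
          rw [show p = p - 1 + 1 by ring, ENNReal.rpow_add _ _ hc0 hctop, ENNReal.rpow_one]
          ring_nf
  -- conclude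
  calc (∫⁻ t in Ioi (0:ℝ),
      ENNReal.ofReal (Real.exp (-δ * t)) * ENNReal.ofReal |u t - u 0| ^ p) ^ (1/p)
      ≤ (c ^ p * B) ^ (1/p) := ENNReal.rpow_le_rpow hmain (by positivity)
    _ = c * B ^ (1/p) := by
        rw [ENNReal.mul_rpow_of_nonneg _ _ (by positivity), ← ENNReal.rpow_mul,
          mul_one_div_cancel hp0.ne', ENNReal.rpow_one]
    _ = ENNReal.ofReal (p / δ) * B ^ (1/p) := by
        rw [hcdef, hβdef, inv_div]
end

section
/- Let $p \in [1,\infty)$, $\delta > 0$, $T > 0$, and let $u : [0,T] \to \mathbb{R}$ be absolutely continuous with $u(0) = 0$. Then $\int_0^T e^{-\delta t} |u(t)|^p \, dt \le \frac{p}{\delta} \left(\int_0^T e^{-\delta t} |u(t)|^p \, dt\right)^{1-1/p} \left(\int_0^T e^{-\delta t} |\dot{u}(t)|^p \, dt\right)^{1/p}$ when $p > 1$. -/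
open MeasureTheory Set
open scoped ENNReal NNReal

lemma exp_aff_integral (c d a b : ℝ) (hc : c ≠ 0) :
    ∫ x in a..b, Real.exp (c*x + d) = (Real.exp (c*b+d) - Real.exp (c*a+d))/c := by
  have h : ∀ x ∈ Set.uIcc a b, HasDerivAt (fun y => Real.exp (c*y + d)/c) (Real.exp (c*x+d)) x := by
    intro x _
    have h1 : HasDerivAt (fun y : ℝ => c*y + d) c x := by
      simpa using ((hasDerivAt_id x).const_mul c).add_const d
    have h2 := ((Real.hasDerivAt_exp (c*x+d)).comp x h1).div_const c
    simpa [mul_div_cancel_right₀, hc] using h2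
  have hint : IntervalIntegrable (fun x => Real.exp (c*x+d)) volume a b :=
    (Real.continuous_exp.comp (by continuity)).intervalIntegrable a b
  rw [intervalIntegral.integral_eq_sub_of_hasDerivAt h hint]
  ring

/-- Finite-horizon weighted estimate: for `p > 1`, `δ > 0`, `T > 0` and an absolutely
continuous `u : [0,T] → ℝ` with `u 0 = 0` (encoded via its a.e. derivative `u'` and the
fundamental theorem of calculus on `[0,T]`),
`∫_0^T e^{-δt}|u|^p ≤ (p/δ) (∫_0^T e^{-δt}|u|^p)^{1-1/p} (∫_0^T e^{-δt}|u'|^p)^{1/p}`. -/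
theorem weighted_poincare_finite (p δ T : ℝ) (hp : 1 < p) (hδ : 0 < δ) (hT : 0 < T)
    (u u' : ℝ → ℝ) (h0 : u 0 = 0)
    (hcont : ContinuousOn u (Set.Icc 0 T))
    (hFTC : ∀ s t : ℝ, 0 ≤ s → s ≤ t → t ≤ T →
      IntervalIntegrable u' volume s t ∧ u t - u s = ∫ r in s..t, u' r)
    (hint : IntegrableOn (fun t => Real.exp (-δ * t) * |u' t| ^ p) (Set.Icc 0 T)) :
    (∫ t in (0:ℝ)..T, Real.exp (-δ * t) * |u t| ^ p)
      ≤ (p / δ) * (∫ t in (0:ℝ)..T, Real.exp (-δ * t) * |u t| ^ p) ^ (1 - 1/p)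
          * (∫ t in (0:ℝ)..T, Real.exp (-δ * t) * |u' t| ^ p) ^ (1/p) := by
  have hp0 : (0:ℝ) < p := lt_trans one_pos hp
  have hpq : p.HolderConjugate (Real.conjExponent p) := Real.HolderConjugate.conjExponent hp
  set q : ℝ := Real.conjExponent p with hq
  have hq0 : (0:ℝ) < q := hpq.symm.pos
  set r : ℝ := δ / p with hrdef
  have hr : 0 < r := div_pos hδ hp0
  have hrp : r * p = δ := div_mul_cancel₀ δ hp0.ne'
  -- basic exp powers
  have hpow : ∀ x : ℝ, Real.exp (-(r*x)) ^ p = Real.exp (-δ*x) := by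
    intro x
    rw [← Real.exp_mul]
    congr 1
    rw [← hrp]; ring
  set A : ℝ := ∫ t in (0:ℝ)..T, Real.exp (-δ * t) * |u t| ^ p with hA
  set B : ℝ := ∫ t in (0:ℝ)..T, Real.exp (-δ * t) * |u' t| ^ p with hB
  have hBnn : 0 ≤ B := by
    apply intervalIntegral.integral_nonneg hT.le
    intro x _
    positivity
  -- measurable representative of the weight function of u'
  have hΦmeas : AEMeasurable (fun s => ENNReal.ofReal (Real.exp (-δ*s) * |u' s| ^ p))
      (volume.restrict (Set.Icc 0 T)) :=
    ENNReal.measurable_ofReal.comp_aemeasurable hint.aestronglyMeasurable.aemeasurable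
  obtain ⟨w, hw_meas, hw_ae⟩ := hΦmeas
  set C : ℝ≥0∞ := ENNReal.ofReal (p/δ) with hC
  have hCne : C ≠ ⊤ := ENNReal.ofReal_ne_top
  have hC0 : C ≠ 0 := by
    simp [hC, ENNReal.ofReal_eq_zero, not_le]
    positivity
  -- the kernel with indicator, on the product space
  set F : ℝ → ℝ → ℝ≥0∞ := fun t s =>
    if 0 < s ∧ s ≤ t then ENNReal.ofReal (Real.exp (-(r*(t-s)))) * w s else 0 with hF
  -- key pointwise estimate
  have key : ∀ t ∈ Set.Ioc (0:ℝ) T,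
      ENNReal.ofReal (Real.exp (-δ*t) * |u t| ^ p) ≤ C ^ (p-1) * ∫⁻ s, F t s := by

    intro t ht
    obtain ⟨ht0, htT⟩ := ht
    have hiu' := (hFTC 0 t le_rfl ht0.le htT).1
    have hu'int : IntegrableOn u' (Set.Ioc 0 t) volume := by
      rwa [intervalIntegrable_iff_integrableOn_Ioc_of_le ht0.le] at hiu'
    have hu'm : AEMeasurable u' (volume.restrict (Set.Ioc 0 t)) :=
      hu'int.aestronglyMeasurable.aemeasurable
    have hut : |u t| ≤ ∫ s in (0:ℝ)..t, |u' s| := by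
      have h2 := (hFTC 0 t le_rfl ht0.le htT).2
      rw [h0, sub_zero] at h2
      rw [h2]
      exact intervalIntegral.abs_integral_le_integral_abs ht0.le
    have hreal : Real.exp (-(r*t)) * |u t| ≤ ∫ s in Set.Ioc 0 t, Real.exp (-(r*t)) * |u' s| := by
      rw [← intervalIntegral.integral_of_le ht0.le, intervalIntegral.integral_const_mul]
      exact mul_le_mul_of_nonneg_left hut (Real.exp_nonneg _)
    set Y : ℝ → ℝ≥0∞ := fun s => ENNReal.ofReal (Real.exp (-(r*s)) * |u' s|) with hY
    set G : ℝ → ℝ≥0∞ := fun s => ENNReal.ofReal (Real.exp (-(r*(t-s)))) with hG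
    have hker : Continuous (fun s : ℝ => Real.exp (-(r*(t-s)))) :=
      Real.continuous_exp.comp (continuous_const.mul (continuous_const.sub continuous_id)).neg
    have hker2 : Continuous (fun s : ℝ => Real.exp (-(r*s))) :=
      Real.continuous_exp.comp (continuous_const.mul continuous_id).neg
    have hGmeas : Measurable G := ENNReal.measurable_ofReal.comp hker.measurable
    have hYmeas : AEMeasurable Y (volume.restrict (Set.Ioc 0 t)) :=
      ENNReal.measurable_ofReal.comp_aemeasurable
        ((hker2.measurable.aemeasurable).mul (measurable_abs.comp_aemeasurable hu'm))
    have hGne0 : ∀ s, G s ≠ 0 := fun s => by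
      simp [hG, ENNReal.ofReal_eq_zero, not_le, Real.exp_pos]
    have hfact : ∀ s : ℝ, ENNReal.ofReal (Real.exp (-(r*t)) * |u' s|)
        = (G s ^ (1/q)) * (G s ^ (1/p) * Y s) := by
      intro s
      have e2 : G s ^ (1/q) * G s ^ (1/p) = G s := by
        rw [← ENNReal.rpow_add _ _ (hGne0 s) ENNReal.ofReal_ne_top]
        rw [show (1:ℝ)/q + 1/p = 1 by
          have := hpq.symm.inv_add_inv_eq_one
          rw [one_div, one_div]
          linarith, ENNReal.rpow_one]
      rw [← mul_assoc, e2, hG, hY]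
      rw [← ENNReal.ofReal_mul (Real.exp_nonneg _)]
      rw [← mul_assoc, ← Real.exp_add]
      congr 2
      ring
    have step1 : ENNReal.ofReal (Real.exp (-(r*t)) * |u t|)
        ≤ ∫⁻ s in Set.Ioc 0 t,
            ((fun s => G s ^ (1/q)) * (fun s => G s ^ (1/p) * Y s)) s := by
      calc ENNReal.ofReal (Real.exp (-(r*t)) * |u t|)
          ≤ ENNReal.ofReal (∫ s in Set.Ioc 0 t, Real.exp (-(r*t)) * |u' s|) :=
            ENNReal.ofReal_le_ofReal hreal
        _ = ∫⁻ s in Set.Ioc 0 t, ENNReal.ofReal (Real.exp (-(r*t)) * |u' s|) :=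
            ofReal_integral_eq_lintegral_ofReal (hu'int.abs.const_mul _)
              (Filter.Eventually.of_forall fun s => by positivity)
        _ = _ := lintegral_congr fun s => hfact s
    have hGq : Measurable (fun s => G s ^ ((1:ℝ)/q)) :=
      ENNReal.continuous_rpow_const.measurable.comp hGmeas
    have hGp : Measurable (fun s => G s ^ ((1:ℝ)/p)) :=
      ENNReal.continuous_rpow_const.measurable.comp hGmeas
    have holder := ENNReal.lintegral_mul_le_Lp_mul_Lq (μ := volume.restrict (Set.Ioc 0 t)) hpq.symm
      (f := fun s => G s ^ ((1:ℝ)/q)) (g := fun s => G s ^ ((1:ℝ)/p) * Y s)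
      hGq.aemeasurable (hGp.aemeasurable.mul hYmeas)
    have hfq : (∫⁻ s in Set.Ioc 0 t, (G s ^ ((1:ℝ)/q)) ^ q) = ∫⁻ s in Set.Ioc 0 t, G s :=
      lintegral_congr fun s => by
        rw [← ENNReal.rpow_mul, one_div, inv_mul_cancel₀ hq0.ne', ENNReal.rpow_one]
    have hGint : (∫⁻ s in Set.Ioc 0 t, G s) ≤ C := by
      rw [hG]
      rw [← ofReal_integral_eq_lintegral_ofReal hker.integrableOn_Ioc
        (Filter.Eventually.of_forall fun s => (Real.exp_pos _).le)]
      apply ENNReal.ofReal_le_ofReal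
      rw [← intervalIntegral.integral_of_le ht0.le]
      have heq : ∀ s : ℝ, Real.exp (-(r*(t-s))) = Real.exp (r*s + (-(r*t))) := fun s => by
        congr 1; ring
      simp_rw [heq]
      rw [exp_aff_integral r (-(r*t)) 0 t hr.ne']
      have h1 : r*t + -(r*t) = 0 := by ring
      rw [h1, Real.exp_zero]
      have h2 : (1 - Real.exp (r*0 + -(r*t)))/r ≤ 1/r := by
        gcongr
        linarith [Real.exp_pos (r*0 + -(r*t))]
      calc (1 - Real.exp (r*0 + -(r*t)))/r ≤ 1/r := h2
        _ = p/δ := by rw [hrdef, one_div_div]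
    have hsub : Set.Ioc 0 t ⊆ Set.Icc 0 T := fun x hx => ⟨hx.1.le, hx.2.trans htT⟩
    have hw' : ∀ᵐ s ∂(volume.restrict (Set.Ioc 0 t)),
        ENNReal.ofReal (Real.exp (-δ*s) * |u' s| ^ p) = w s :=
      ae_restrict_of_ae_restrict_of_subset hsub hw_ae
    have hgp : (∫⁻ s in Set.Ioc 0 t, (G s ^ ((1:ℝ)/p) * Y s) ^ p) = ∫⁻ s in Set.Ioc 0 t, G s * w s := by
      have hpt : ∀ s, (G s ^ ((1:ℝ)/p) * Y s) ^ p
          = G s * ENNReal.ofReal (Real.exp (-δ*s) * |u' s| ^ p) := by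
        intro s
        rw [ENNReal.mul_rpow_of_nonneg _ _ hp0.le, ← ENNReal.rpow_mul, one_div,
          inv_mul_cancel₀ hp0.ne', ENNReal.rpow_one]
        congr 1
        rw [hY, ENNReal.ofReal_rpow_of_nonneg (by positivity) hp0.le]
        congr 1
        rw [Real.mul_rpow (Real.exp_nonneg _) (abs_nonneg _), hpow s]
      calc (∫⁻ s in Set.Ioc 0 t, (G s ^ ((1:ℝ)/p) * Y s) ^ p)
          = ∫⁻ s in Set.Ioc 0 t, G s * ENNReal.ofReal (Real.exp (-δ*s) * |u' s| ^ p) :=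
            lintegral_congr fun s => hpt s
        _ = ∫⁻ s in Set.Ioc 0 t, G s * w s :=
            lintegral_congr_ae (hw'.mono fun s hs => by dsimp only; rw [hs])
    have hFt : (∫⁻ s, F t s) = ∫⁻ s in Set.Ioc 0 t, G s * w s := by
      rw [← lintegral_indicator measurableSet_Ioc]
      exact lintegral_congr fun s => by
        by_cases h : s ∈ Set.Ioc 0 t
        · simp only [hF, Set.indicator_of_mem h, hG]
          rw [if_pos (Set.mem_Ioc.mp h)]
        · simp only [hF, Set.indicator_of_notMem h, hG]
          rw [if_neg (by simpa [Set.mem_Ioc] using h)]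
    have main : ENNReal.ofReal (Real.exp (-(r*t)) * |u t|)
        ≤ C ^ ((1:ℝ)/q) * (∫⁻ s, F t s) ^ ((1:ℝ)/p) := by
      refine (step1.trans holder).trans ?_
      rw [hfq, hgp, hFt]
      exact mul_le_mul' (ENNReal.rpow_le_rpow hGint (by positivity)) le_rfl
    calc ENNReal.ofReal (Real.exp (-δ*t) * |u t| ^ p)
        = ENNReal.ofReal (Real.exp (-(r*t)) * |u t|) ^ p := by
          rw [ENNReal.ofReal_rpow_of_nonneg (by positivity) hp0.le]
          congr 1
          rw [Real.mul_rpow (Real.exp_nonneg _) (abs_nonneg _), hpow t]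
      _ ≤ (C ^ ((1:ℝ)/q) * (∫⁻ s, F t s) ^ ((1:ℝ)/p)) ^ p :=
          ENNReal.rpow_le_rpow main hp0.le
      _ = C ^ (p-1) * ∫⁻ s, F t s := by
          rw [ENNReal.mul_rpow_of_nonneg _ _ hp0.le, ← ENNReal.rpow_mul, ← ENNReal.rpow_mul]
          rw [show (1:ℝ)/q * p = p - 1 by
            rw [div_mul_eq_mul_div, one_mul, hpq.div_conj_eq_sub_one]]
          rw [show (1:ℝ)/p * p = 1 by field_simp, ENNReal.rpow_one]

  -- measurability of the uncurried kernel
  have hFmeas : Measurable (Function.uncurry F) := by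
    have hset : MeasurableSet {z : ℝ × ℝ | 0 < z.2 ∧ z.2 ≤ z.1} :=
      (measurableSet_lt measurable_const measurable_snd).inter
        (measurableSet_le measurable_snd measurable_fst)
    have hfun : Measurable (fun z : ℝ × ℝ =>
        ENNReal.ofReal (Real.exp (-(r*(z.1-z.2)))) * w z.2) :=
      (ENNReal.measurable_ofReal.comp
        (Real.continuous_exp.comp
          (continuous_const.mul (continuous_fst.sub continuous_snd)).neg).measurable).mul
        (hw_meas.comp measurable_snd)
    exact Measurable.ite hset hfun measurable_const
  have hswap : (∫⁻ t in Set.Ioc 0 T, ∫⁻ s, F t s) = ∫⁻ s, ∫⁻ t in Set.Ioc 0 T, F t s :=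
    lintegral_lintegral_swap hFmeas.aemeasurable
  have hAnn : ∀ x : ℝ, 0 ≤ Real.exp (-δ*x) * |u x| ^ p := fun x => by positivity
  have hAint : IntegrableOn (fun t => Real.exp (-δ*t) * |u t| ^ p) (Set.Icc 0 T) := by
    apply ContinuousOn.integrableOn_compact isCompact_Icc
    exact ((Real.continuous_exp.comp (continuous_const.mul continuous_id)).continuousOn).mul
      ((hcont.abs).rpow_const (fun x _ => Or.inr hp0.le))
  have hAIoc : A = ∫ t in Set.Ioc 0 T, Real.exp (-δ*t) * |u t| ^ p := by
    rw [hA, intervalIntegral.integral_of_le hT.le]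
  have hAe : ENNReal.ofReal A
      = ∫⁻ t in Set.Ioc 0 T, ENNReal.ofReal (Real.exp (-δ*t) * |u t| ^ p) := by
    rw [hAIoc]
    exact ofReal_integral_eq_lintegral_ofReal (hAint.mono_set Set.Ioc_subset_Icc_self)
      (Filter.Eventually.of_forall fun x => hAnn x)
  have hBw : (∫⁻ s in Set.Ioc 0 T, w s) = ENNReal.ofReal B := by
    have h1 : ENNReal.ofReal B
        = ∫⁻ s in Set.Ioc 0 T, ENNReal.ofReal (Real.exp (-δ*s) * |u' s| ^ p) := by
      rw [hB, intervalIntegral.integral_of_le hT.le]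
      exact ofReal_integral_eq_lintegral_ofReal (hint.mono_set Set.Ioc_subset_Icc_self)
        (Filter.Eventually.of_forall fun x => by positivity)
    rw [h1]
    exact lintegral_congr_ae
      ((ae_restrict_of_ae_restrict_of_subset Set.Ioc_subset_Icc_self hw_ae).mono
        fun s hs => hs.symm)
  have hinner : ∀ s : ℝ, (∫⁻ t in Set.Ioc 0 T, F t s)
      ≤ (Set.Ioc 0 T).indicator (fun s => C * w s) s := by
    intro s
    by_cases hs : s ∈ Set.Ioc 0 T
    · rw [Set.indicator_of_mem hs]
      have hb : ∀ t : ℝ, F t s ≤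
          (Set.Ici s).indicator (fun t => ENNReal.ofReal (Real.exp (-(r*(t-s))))) t * w s := by
        intro t
        by_cases h : 0 < s ∧ s ≤ t
        · simp only [hF]
          rw [if_pos h, Set.indicator_of_mem (Set.mem_Ici.mpr h.2)]
        · simp only [hF]
          rw [if_neg h]
          exact zero_le
      have hkermeas : Measurable
          (fun t : ℝ => ENNReal.ofReal (Real.exp (-(r*(t-s))))) :=
        ENNReal.measurable_ofReal.comp
          (Real.continuous_exp.comp
            (continuous_const.mul (continuous_id.sub continuous_const)).neg).measurable
      calc (∫⁻ t in Set.Ioc 0 T, F t s)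
          ≤ ∫⁻ t in Set.Ioc 0 T,
              (Set.Ici s).indicator (fun t => ENNReal.ofReal (Real.exp (-(r*(t-s))))) t * w s :=
            lintegral_mono fun t => hb t
        _ = (∫⁻ t in Set.Ioc 0 T,
              (Set.Ici s).indicator (fun t => ENNReal.ofReal (Real.exp (-(r*(t-s))))) t) * w s :=
            lintegral_mul_const _ (hkermeas.indicator measurableSet_Ici)
        _ ≤ C * w s := by
            apply mul_le_mul_left
            rw [lintegral_indicator measurableSet_Ici,
              Measure.restrict_restrict measurableSet_Ici]
            have hss : Set.Ici s ∩ Set.Ioc 0 T ⊆ Set.Icc s T := fun x hx => ⟨hx.1, hx.2.2⟩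
            refine le_trans (lintegral_mono_set hss) ?_
            have hkercont : Continuous (fun t : ℝ => Real.exp (-(r*(t-s)))) :=
              Real.continuous_exp.comp
                (continuous_const.mul (continuous_id.sub continuous_const)).neg
            rw [← ofReal_integral_eq_lintegral_ofReal hkercont.integrableOn_Icc
              (Filter.Eventually.of_forall fun x => (Real.exp_pos _).le)]
            apply ENNReal.ofReal_le_ofReal
            rw [MeasureTheory.integral_Icc_eq_integral_Ioc,
              ← intervalIntegral.integral_of_le hs.2]
            have heq : ∀ x : ℝ, Real.exp (-(r*(x-s))) = Real.exp ((-r)*x + r*s) := fun x => by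
              congr 1; ring
            simp_rw [heq]
            rw [exp_aff_integral (-r) (r*s) s T (neg_ne_zero.mpr hr.ne')]
            have h3 : (-r)*s + r*s = 0 := by ring
            rw [h3, Real.exp_zero]
            have h4 : (Real.exp ((-r)*T + r*s) - 1)/(-r) = (1 - Real.exp ((-r)*T + r*s))/r := by
              rw [div_neg, ← neg_div, neg_sub]
            rw [h4]
            have h5 : (1 - Real.exp ((-r)*T + r*s))/r ≤ 1/r := by
              gcongr
              linarith [Real.exp_pos ((-r)*T + r*s)]
            calc (1 - Real.exp ((-r)*T + r*s))/r ≤ 1/r := h5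
              _ = p/δ := by rw [hrdef, one_div_div]
    · rw [Set.indicator_of_notMem hs]
      have hz : ∀ t ∈ Set.Ioc 0 T, F t s = (0:ℝ≥0∞) := by
        intro t ht'
        simp only [hF]
        rw [if_neg]
        intro hcond
        exact hs (Set.mem_Ioc.mpr ⟨hcond.1, le_trans hcond.2 ht'.2⟩)
      have : (∫⁻ t in Set.Ioc 0 T, F t s) = ∫⁻ _t in Set.Ioc 0 T, (0:ℝ≥0∞) :=
        setLIntegral_congr_fun measurableSet_Ioc hz
      rw [this]
      simp
  have habs : ENNReal.ofReal A ≤ C^p * ENNReal.ofReal B := by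
    rw [hAe]
    calc (∫⁻ t in Set.Ioc 0 T, ENNReal.ofReal (Real.exp (-δ*t) * |u t| ^ p))
        ≤ ∫⁻ t in Set.Ioc 0 T, C^(p-1) * ∫⁻ s, F t s :=
          setLIntegral_mono' measurableSet_Ioc key
      _ = C^(p-1) * ∫⁻ t in Set.Ioc 0 T, ∫⁻ s, F t s :=
          lintegral_const_mul' _ _ (ENNReal.rpow_ne_top_of_nonneg (by linarith) hCne)
      _ = C^(p-1) * ∫⁻ s, ∫⁻ t in Set.Ioc 0 T, F t s := by rw [hswap]
      _ ≤ C^(p-1) * ∫⁻ s, (Set.Ioc 0 T).indicator (fun s => C * w s) s :=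
          mul_le_mul' le_rfl (lintegral_mono hinner)
      _ = C^(p-1) * (C * ∫⁻ s in Set.Ioc 0 T, w s) := by
          rw [lintegral_indicator measurableSet_Ioc, lintegral_const_mul' _ _ hCne]
      _ = C^p * ENNReal.ofReal B := by
          rw [hBw, ← mul_assoc]
          congr 1
          calc C^(p-1) * C = C^(p-1) * C^(1:ℝ) := by rw [ENNReal.rpow_one]
            _ = C^(p-1+1) := (ENNReal.rpow_add _ _ hC0 hCne).symm
            _ = C^p := by norm_num
  have hAB : A ≤ (p/δ)^p * B := by
    have hCp : C^p = ENNReal.ofReal ((p/δ)^p) :=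
      ENNReal.ofReal_rpow_of_nonneg (by positivity) hp0.le
    rw [hCp, ← ENNReal.ofReal_mul (by positivity)] at habs
    exact (ENNReal.ofReal_le_ofReal_iff (by positivity)).mp habs
  have hA0 : 0 ≤ A := by
    rw [hA]
    exact intervalIntegral.integral_nonneg hT.le fun x _ => hAnn x
  calc A = A ^ ((1 - 1/p) + 1/p) := by rw [sub_add_cancel, Real.rpow_one]
    _ = A ^ (1-1/p) * A ^ (1/p) := Real.rpow_add' hA0 (by rw [sub_add_cancel]; exact one_ne_zero)
    _ ≤ A ^ (1-1/p) * ((p/δ) * B^(1/p)) := by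
        apply mul_le_mul_of_nonneg_left ?_ (Real.rpow_nonneg hA0 _)
        calc A^(1/p) ≤ ((p/δ)^p * B)^(1/p) :=
              Real.rpow_le_rpow hA0 hAB (by positivity)
          _ = ((p/δ)^p)^(1/p) * B^(1/p) := Real.mul_rpow (by positivity) hBnn
          _ = (p/δ) * B^(1/p) := by
              rw [← Real.rpow_mul (by positivity), mul_one_div, div_self hp0.ne', Real.rpow_one]
    _ = (p/δ) * A^(1-1/p) * B^(1/p) := by ring
end

section
/- Let $(X,d)$ be a metric space, $p \in [1,\infty)$, $\delta > 0$, and let $\sigma : [0,\infty) \to X$ be a curve such that the function $u(t) := d(\sigma(t), \sigma(0))$ is locally absolutely continuous with $|\dot u(t)| \le g(t)$ a.e. for a measurable function $g \ge 0$ satisfying $d(\sigma(s),\sigma(t)) \le \int_s^t g(r)\,dr$ for all $0 \le s \le t$. Then $\left(\int_0^\infty e^{-\delta t} d(\sigma(t),\sigma(0))^p \, dt\right)^{1/p} \le \frac{p}{\delta} \left(\int_0^\infty e^{-\delta t} g(t)^p \, dt\right)^{1/p}$. -/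
open MeasureTheory Set Real
open scoped ENNReal

lemma exp_int_Ioi (b r : ℝ) (hb : 0 < b) :
    ∫⁻ t in Ioi r, ENNReal.ofReal (Real.exp (-b * t)) = ENNReal.ofReal (Real.exp (-b * r) / b) := by
  have hint : IntegrableOn (fun t => Real.exp (-b * t)) (Ioi r) := exp_neg_integrableOn_Ioi r hb
  rw [← ofReal_integral_eq_lintegral_ofReal hint (ae_of_all _ fun t => (Real.exp_pos _).le)]
  congr 1
  have hderiv : ∀ x ∈ Ici r, HasDerivAt (fun t => -Real.exp (-b * t) / b) (Real.exp (-b * x)) x := by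
    intro x _
    have h1 : HasDerivAt (fun t : ℝ => -b * t) (-b) x := by
      simpa using (hasDerivAt_id x).const_mul (-b)
    have h2 := (Real.hasDerivAt_exp (-b * x)).comp x h1
    have := (h2.neg).div_const b
    convert this using 1
    all_goals first | rfl | field_simp
  have hlim : Filter.Tendsto (fun t => -Real.exp (-b * t) / b) Filter.atTop (nhds 0) := by
    have h : Filter.Tendsto (fun t : ℝ => Real.exp (-b * t)) Filter.atTop (nhds 0) := by
      have hbt : Filter.Tendsto (fun t : ℝ => b * t) Filter.atTop Filter.atTop :=
        Filter.Tendsto.const_mul_atTop hb Filter.tendsto_id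
      simpa using hbt
    simpa using (h.neg.div_const b)
  have := integral_Ioi_of_hasDerivAt_of_tendsto' hderiv hint hlim
  rw [this]; ring

lemma exp_int_interval (c t : ℝ) (hc : c ≠ 0) :
    ∫ x in (0:ℝ)..t, Real.exp (c * x) = (Real.exp (c * t) - 1) / c := by
  rw [intervalIntegral.integral_comp_mul_left (fun x => Real.exp x) hc]
  simp [integral_exp, div_eq_inv_mul]

lemma tonelli_step (b : ℝ) (hb : 0 < b) (h : ℝ → ℝ≥0∞) (hh : Measurable h) :
    (∫⁻ t in Ioi (0:ℝ), ENNReal.ofReal (Real.exp (-b * t)) * ∫⁻ r in Ioc 0 t, h r)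
      = ∫⁻ r in Ioi (0:ℝ), ENNReal.ofReal (Real.exp (-b * r) / b) * h r := by
  set F : ℝ → ℝ → ℝ≥0∞ := fun t r =>
    (Ioc (0:ℝ) t).indicator (fun r => ENNReal.ofReal (Real.exp (-b * t)) * h r) r with hF
  have hFmeas : Measurable (Function.uncurry F) := by
    have : Function.uncurry F = fun q : ℝ × ℝ =>
        ({q : ℝ × ℝ | 0 < q.2 ∧ q.2 ≤ q.1}).indicator
          (fun q => ENNReal.ofReal (Real.exp (-b * q.1)) * h q.2) q := by
      funext q
      simp only [Function.uncurry, hF, Set.indicator_apply, Set.mem_Ioc, Set.mem_setOf_eq]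
    rw [this]
    exact Measurable.indicator
      ((ENNReal.measurable_ofReal.comp ((Real.continuous_exp.measurable).comp
        (measurable_fst.const_mul (-b)))).mul (hh.comp measurable_snd))
      ((measurableSet_lt measurable_const measurable_snd).inter
        (measurableSet_le measurable_snd measurable_fst))
  have step1 : ∀ t : ℝ, ENNReal.ofReal (Real.exp (-b * t)) * ∫⁻ r in Ioc 0 t, h r
      = ∫⁻ r in Ioi (0:ℝ), F t r := by
    intro t
    simp only [hF]
    rw [lintegral_indicator measurableSet_Ioc, Measure.restrict_restrict measurableSet_Ioc]
    rw [Set.Ioc_inter_Ioi]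
    rw [lintegral_const_mul' _ _ ENNReal.ofReal_ne_top]
    congr 2
    simp
  have step3 : ∀ r ∈ Ioi (0:ℝ), (∫⁻ t in Ioi (0:ℝ), F t r)
      = ENNReal.ofReal (Real.exp (-b * r) / b) * h r := by
    intro r hr
    have hr' : (0:ℝ) < r := hr
    have : ∀ t : ℝ, F t r = (Ici r).indicator (fun t => ENNReal.ofReal (Real.exp (-b * t)) * h r) t := by
      intro t
      simp only [hF, Set.indicator_apply, Set.mem_Ioc, Set.mem_Ici]
      by_cases hrt : r ≤ t <;> simp [hrt, hr']
    simp only [this]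
    rw [lintegral_indicator measurableSet_Ici, Measure.restrict_restrict measurableSet_Ici]
    have : Ici r ∩ Ioi (0:ℝ) = Ici r := by
      apply Set.inter_eq_left.mpr
      exact fun x hx => lt_of_lt_of_le hr' hx
    rw [this, lintegral_mul_const _
      (by fun_prop : Measurable fun a : ℝ => ENNReal.ofReal (Real.exp (-b * a)))]
    rw [← restrict_Ioi_eq_restrict_Ici, exp_int_Ioi b r hb, mul_comm]
  calc (∫⁻ t in Ioi (0:ℝ), ENNReal.ofReal (Real.exp (-b * t)) * ∫⁻ r in Ioc 0 t, h r)
      = ∫⁻ t in Ioi (0:ℝ), ∫⁻ r in Ioi (0:ℝ), F t r := by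
        exact lintegral_congr fun t => step1 t
    _ = ∫⁻ r in Ioi (0:ℝ), ∫⁻ t in Ioi (0:ℝ), F t r := by
        exact lintegral_lintegral_swap hFmeas.aemeasurable
    _ = ∫⁻ r in Ioi (0:ℝ), ENNReal.ofReal (Real.exp (-b * r) / b) * h r := by
        refine setLIntegral_congr_fun measurableSet_Ioi step3

lemma holder_pointwise (p δ : ℝ) (hp : 1 ≤ p) (hδ : 0 < δ)
    (g : ℝ → ℝ) (hgm : Measurable g) (hg0 : ∀ t, 0 ≤ g t)
    (u t : ℝ) (hu : 0 ≤ u) (ht : 0 < t)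
    (hbound : ENNReal.ofReal u ≤ ∫⁻ r in Ioc (0:ℝ) t, ENNReal.ofReal (g r)) :
    ENNReal.ofReal (Real.exp (-δ * t) * u ^ p) ≤
      ENNReal.ofReal ((p/δ) ^ (p-1)) * (ENNReal.ofReal (Real.exp (-(δ/p) * t)) *
        ∫⁻ r in Ioc (0:ℝ) t, ENNReal.ofReal (Real.exp (-(δ*(p-1)/p) * r) * g r ^ p)) := by
  have hp0 : 0 < p := lt_of_lt_of_le zero_lt_one hp
  rcases eq_or_lt_of_le hp with hp1 | hp1
  · -- p = 1
    subst hp1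
    calc ENNReal.ofReal (Real.exp (-δ * t) * u ^ (1:ℝ))
        = ENNReal.ofReal (Real.exp (-δ * t)) * ENNReal.ofReal u := by
          rw [Real.rpow_one, ENNReal.ofReal_mul (Real.exp_pos _).le]
      _ ≤ ENNReal.ofReal (Real.exp (-δ * t)) * ∫⁻ r in Ioc (0:ℝ) t, ENNReal.ofReal (g r) :=
          mul_le_mul_right hbound _
      _ = _ := by norm_num
  · -- p > 1
    have hpq : p.HolderConjugate (p/(p-1)) := Real.HolderConjugate.conjExponent hp1
    set q : ℝ := p/(p-1) with hq
    have hq0 : 0 < q := hpq.symm.pos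
    have hpm1 : 0 < p - 1 := sub_pos.mpr hp1
    have hδp : 0 < δ/p := div_pos hδ hp0
    set c : ℝ := δ*(p-1)/(p*p) with hc
    set f₁ : ℝ → ℝ≥0∞ := fun r => ENNReal.ofReal (g r * Real.exp (-c * r)) with hf₁
    set f₂ : ℝ → ℝ≥0∞ := fun r => ENNReal.ofReal (Real.exp (c * r)) with hf₂
    set H : ℝ≥0∞ := ∫⁻ r in Ioc (0:ℝ) t, ENNReal.ofReal (Real.exp (-(δ*(p-1)/p) * r) * g r ^ p) with hH
    set K : ℝ≥0∞ := ENNReal.ofReal ((p/δ) * Real.exp ((δ/p) * t)) with hK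
    -- f₁ * f₂ = ofReal g
    have hmul : ∀ r : ℝ, (f₁ * f₂) r = ENNReal.ofReal (g r) := by
      intro r
      simp only [hf₁, hf₂, Pi.mul_apply]
      rw [← ENNReal.ofReal_mul (mul_nonneg (hg0 r) (Real.exp_pos _).le)]
      rw [mul_assoc, ← Real.exp_add]
      norm_num
    -- f₁ ^ p
    have hpow1 : ∀ r : ℝ, f₁ r ^ p = ENNReal.ofReal (Real.exp (-(δ*(p-1)/p) * r) * g r ^ p) := by
      intro r
      rw [hf₁]
      rw [ENNReal.ofReal_rpow_of_nonneg (mul_nonneg (hg0 r) (Real.exp_pos _).le) hp0.le]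
      congr 1
      rw [Real.mul_rpow (hg0 r) (Real.exp_pos _).le, ← Real.exp_mul]
      rw [mul_comm (g r ^ p)]
      congr 2
      rw [hc]; field_simp
    -- f₂ ^ q
    have hpow2 : ∀ r : ℝ, f₂ r ^ q = ENNReal.ofReal (Real.exp ((δ/p) * r)) := by
      intro r
      rw [hf₂, ENNReal.ofReal_rpow_of_nonneg (Real.exp_pos _).le hq0.le, ← Real.exp_mul]
      congr 2
      rw [hc, hq]; field_simp
    -- integral of f₂ ^ q
    have hIf₂ : (∫⁻ r in Ioc (0:ℝ) t, f₂ r ^ q) ≤ K := by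
      simp only [hpow2]
      have hint : IntegrableOn (fun r => Real.exp ((δ/p) * r)) (Ioc (0:ℝ) t) :=
        (Real.continuous_exp.comp (continuous_const.mul continuous_id)).integrableOn_Ioc
      rw [← ofReal_integral_eq_lintegral_ofReal hint
        (ae_of_all _ fun r => (Real.exp_pos _).le)]
      rw [← intervalIntegral.integral_of_le ht.le, exp_int_interval _ _ hδp.ne']
      rw [hK]
      apply ENNReal.ofReal_le_ofReal
      have h1 : (δ/p)⁻¹ = p/δ := by
        rw [inv_div]
      rw [div_eq_mul_inv, h1]
      nlinarith [div_nonneg hp0.le hδ.le, (Real.exp_pos ((δ/p) * t)).le]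
    -- Hölder
    have hholder : ENNReal.ofReal u ≤ H ^ (1/p) * K ^ (1/q) := by
      calc ENNReal.ofReal u ≤ ∫⁻ r in Ioc (0:ℝ) t, ENNReal.ofReal (g r) := hbound
        _ = ∫⁻ r in Ioc (0:ℝ) t, (f₁ * f₂) r := (lintegral_congr fun r => (hmul r).symm)
        _ ≤ (∫⁻ r in Ioc (0:ℝ) t, f₁ r ^ p) ^ (1/p) * (∫⁻ r in Ioc (0:ℝ) t, f₂ r ^ q) ^ (1/q) := by
            refine ENNReal.lintegral_mul_le_Lp_mul_Lq _ hpq ?_ ?_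
            · exact (ENNReal.measurable_ofReal.comp (by fun_prop)).aemeasurable
            · exact (ENNReal.measurable_ofReal.comp (by fun_prop)).aemeasurable
        _ = H ^ (1/p) * (∫⁻ r in Ioc (0:ℝ) t, f₂ r ^ q) ^ (1/q) := by
            rw [hH, lintegral_congr fun r => hpow1 r]
        _ ≤ H ^ (1/p) * K ^ (1/q) := by
            exact mul_le_mul_right (ENNReal.rpow_le_rpow hIf₂ (by positivity)) _
    -- Raise to the power p
    have hup : ENNReal.ofReal u ^ p ≤ H * K ^ (p-1) := by
      calc ENNReal.ofReal u ^ p ≤ (H ^ (1/p) * K ^ (1/q)) ^ p :=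
            ENNReal.rpow_le_rpow hholder hp0.le
        _ = H * K ^ (p-1) := by
            rw [ENNReal.mul_rpow_of_nonneg _ _ hp0.le]
            rw [← ENNReal.rpow_mul, ← ENNReal.rpow_mul]
            congr 1
            · rw [one_div, inv_mul_cancel₀ hp0.ne', ENNReal.rpow_one]
            · congr 1
              rw [hq]; field_simp
    -- conclude
    have hKp : K ^ (p-1) = ENNReal.ofReal ((p/δ)^(p-1) * Real.exp (δ*(p-1)/p * t)) := by
      rw [hK, ENNReal.ofReal_rpow_of_nonneg
        (mul_nonneg (div_nonneg hp0.le hδ.le) (Real.exp_pos _).le) hpm1.le]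
      congr 1
      rw [Real.mul_rpow (div_nonneg hp0.le hδ.le) (Real.exp_pos _).le, ← Real.exp_mul]
      congr 2
      ring
    calc ENNReal.ofReal (Real.exp (-δ * t) * u ^ p)
        = ENNReal.ofReal (Real.exp (-δ * t)) * ENNReal.ofReal u ^ p := by
          rw [ENNReal.ofReal_mul (Real.exp_pos _).le,
            ENNReal.ofReal_rpow_of_nonneg hu hp0.le]
      _ ≤ ENNReal.ofReal (Real.exp (-δ * t)) * (H * K ^ (p-1)) := mul_le_mul_right hup _
      _ = ENNReal.ofReal ((p/δ) ^ (p-1)) * (ENNReal.ofReal (Real.exp (-(δ/p) * t)) * H) := by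
          have hre : Real.exp (-δ * t) * ((p/δ)^(p-1) * Real.exp (δ*(p-1)/p * t))
              = (p/δ)^(p-1) * Real.exp (-(δ/p) * t) := by
            rw [show Real.exp (-δ * t) * ((p/δ)^(p-1) * Real.exp (δ*(p-1)/p * t))
                = (p/δ)^(p-1) * (Real.exp (-δ * t) * Real.exp (δ*(p-1)/p * t)) from by ring,
              ← Real.exp_add]
            congr 2
            field_simp; ring
          rw [hKp, mul_comm H, ← mul_assoc, ← ENNReal.ofReal_mul (Real.exp_pos _).le, hre,
            ENNReal.ofReal_mul (Real.rpow_nonneg (div_nonneg hp0.le hδ.le) _), mul_assoc]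

/-- Metric-space weighted Poincaré inequality: if `σ : [0,∞) → X` is a curve in a metric
space whose increments are controlled by a nonnegative measurable speed `g` (so that
`t ↦ d(σ t, σ 0)` is locally absolutely continuous with a.e. derivative bounded by `g`),
then the weighted `L^p` distance from the starting point is bounded by `p/δ` times the
weighted `L^p` norm of the speed. -/
theorem weighted_poincare_metric {X : Type*} [MetricSpace X] (p δ : ℝ)
    (hp : 1 ≤ p) (hδ : 0 < δ)
    (σ : ℝ → X) (g : ℝ → ℝ) (hgm : Measurable g) (hg0 : ∀ t, 0 ≤ g t)
    (hgi : ∀ s t : ℝ, 0 ≤ s → s ≤ t → IntervalIntegrable g volume s t)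
    (hcurve : ∀ s t : ℝ, 0 ≤ s → s ≤ t → dist (σ s) (σ t) ≤ ∫ r in s..t, g r) :
    (∫⁻ t in Set.Ioi (0:ℝ), ENNReal.ofReal (Real.exp (-δ * t) * dist (σ t) (σ 0) ^ p)) ^ (1/p)
      ≤ ENNReal.ofReal (p / δ) *
        (∫⁻ t in Set.Ioi (0:ℝ), ENNReal.ofReal (Real.exp (-δ * t) * g t ^ p)) ^ (1/p) := by
  have hp0 : 0 < p := lt_of_lt_of_le zero_lt_one hp
  have hδp : 0 < δ/p := div_pos hδ hp0
  set hfun : ℝ → ℝ≥0∞ := fun r => ENNReal.ofReal (Real.exp (-(δ*(p-1)/p) * r) * g r ^ p)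
    with hhfun
  have hhm : Measurable hfun := by
    apply ENNReal.measurable_ofReal.comp
    fun_prop
  set RHSint : ℝ≥0∞ := ∫⁻ t in Set.Ioi (0:ℝ), ENNReal.ofReal (Real.exp (-δ * t) * g t ^ p)
    with hRHS
  have key : (∫⁻ t in Set.Ioi (0:ℝ), ENNReal.ofReal (Real.exp (-δ * t) * dist (σ t) (σ 0) ^ p))
      ≤ ENNReal.ofReal ((p/δ) ^ p) * RHSint := by
    calc (∫⁻ t in Set.Ioi (0:ℝ), ENNReal.ofReal (Real.exp (-δ * t) * dist (σ t) (σ 0) ^ p))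
        ≤ ∫⁻ t in Set.Ioi (0:ℝ), ENNReal.ofReal ((p/δ) ^ (p-1)) *
            (ENNReal.ofReal (Real.exp (-(δ/p) * t)) * ∫⁻ r in Set.Ioc (0:ℝ) t, hfun r) := by
          refine lintegral_mono_ae ((ae_restrict_iff' measurableSet_Ioi).mpr
            (ae_of_all _ fun t ht => ?_))
          have ht : (0:ℝ) < t := ht
          refine holder_pointwise p δ hp hδ g hgm hg0 _ t dist_nonneg ht ?_
          have hint : IntegrableOn g (Set.Ioc (0:ℝ) t) :=
            (intervalIntegrable_iff_integrableOn_Ioc_of_le ht.le).mp (hgi 0 t le_rfl ht.le)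
          calc ENNReal.ofReal (dist (σ t) (σ 0))
              ≤ ENNReal.ofReal (∫ r in (0:ℝ)..t, g r) := by
                apply ENNReal.ofReal_le_ofReal
                rw [dist_comm]
                exact hcurve 0 t le_rfl ht.le
            _ = ∫⁻ r in Set.Ioc (0:ℝ) t, ENNReal.ofReal (g r) := by
                rw [intervalIntegral.integral_of_le ht.le,
                  ofReal_integral_eq_lintegral_ofReal hint (ae_of_all _ fun r => hg0 r)]
      _ = ENNReal.ofReal ((p/δ) ^ (p-1)) * ∫⁻ t in Set.Ioi (0:ℝ),
            ENNReal.ofReal (Real.exp (-(δ/p) * t)) * ∫⁻ r in Set.Ioc (0:ℝ) t, hfun r :=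
          lintegral_const_mul' _ _ ENNReal.ofReal_ne_top
      _ = ENNReal.ofReal ((p/δ) ^ (p-1)) * ∫⁻ r in Set.Ioi (0:ℝ),
            ENNReal.ofReal (Real.exp (-(δ/p) * r) / (δ/p)) * hfun r := by
          rw [tonelli_step (δ/p) hδp hfun hhm]
      _ = ENNReal.ofReal ((p/δ) ^ (p-1)) * ∫⁻ r in Set.Ioi (0:ℝ),
            ENNReal.ofReal (p/δ) * ENNReal.ofReal (Real.exp (-δ * r) * g r ^ p) := by
          congr 1
          refine lintegral_congr fun r => ?_
          rw [hhfun]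
          rw [← ENNReal.ofReal_mul (by positivity), ← ENNReal.ofReal_mul (by positivity)]
          congr 1
          have hexp : Real.exp (-(δ/p) * r) * Real.exp (-(δ*(p-1)/p) * r)
              = Real.exp (-δ * r) := by
            rw [← Real.exp_add]
            congr 1
            field_simp
            ring
          rw [div_eq_mul_inv _ (δ/p), inv_div]
          rw [show Real.exp (-(δ/p) * r) * (p/δ) * (Real.exp (-(δ*(p-1)/p) * r) * g r ^ p)
              = (p/δ) * ((Real.exp (-(δ/p) * r) * Real.exp (-(δ*(p-1)/p) * r)) * g r ^ p)
              from by ring, hexp]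
      _ = ENNReal.ofReal ((p/δ) ^ (p-1)) * (ENNReal.ofReal (p/δ) * RHSint) := by
          rw [lintegral_const_mul' _ _ ENNReal.ofReal_ne_top]
      _ = ENNReal.ofReal ((p/δ) ^ p) * RHSint := by
          rw [← mul_assoc, ← ENNReal.ofReal_mul (Real.rpow_nonneg (by positivity) _)]
          congr 2
          rw [← Real.rpow_add_one (ne_of_gt (div_pos hp0 hδ)) (p-1), sub_add_cancel]
  calc (∫⁻ t in Set.Ioi (0:ℝ), ENNReal.ofReal (Real.exp (-δ * t) * dist (σ t) (σ 0) ^ p)) ^ (1/p)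
      ≤ (ENNReal.ofReal ((p/δ) ^ p) * RHSint) ^ (1/p) :=
        ENNReal.rpow_le_rpow key (by positivity)
    _ = ENNReal.ofReal ((p/δ) ^ p) ^ (1/p) * RHSint ^ (1/p) :=
        ENNReal.mul_rpow_of_nonneg _ _ (by positivity)
    _ = ENNReal.ofReal (p/δ) * RHSint ^ (1/p) := by
        rw [ENNReal.ofReal_rpow_of_nonneg (by positivity) (by positivity),
          ← Real.rpow_mul (by positivity), mul_one_div_cancel hp0.ne', Real.rpow_one]
end

section
/- Let $(X,d)$ be a metric space, $p \in (1,\infty)$, $\delta > 0$. Suppose $\mathcal{V} : X \to \mathbb{R}$ satisfies $\mathcal{V}(x) \le \alpha\, d(x,\varrho)^p + \beta$ for all $x \in X$, with $\alpha \ge 0$, $\beta \in \mathbb{R}$, $\varrho \in X$ fixed, and $p(2p/\delta)^p \alpha < 1$. Let $\sigma : [0,\infty) \to X$ be a curve with measurable speed $g$ (i.e., $d(\sigma(s),\sigma(t)) \le \int_s^t g$ for $s \le t$) and $\int_0^\infty e^{-\delta t} g(t)^p dt < \infty$. Then $\int_0^\infty e^{-\delta t}\left(\frac{1}{p}g(t)^p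 - \mathcal{V}(\sigma(t))\right)dt \ge -\frac{1}{\delta}\left(\beta + 2^p\alpha\, d(\sigma(0),\varrho)^p\right)$. -/
open MeasureTheory Set Filter
open scoped ENNReal

lemma int_exp_neg_Ioi {c : ℝ} (hc : 0 < c) (s : ℝ) :
    ∫ t in Set.Ioi s, Real.exp (-c * t) = Real.exp (-c * s) / c := by
  have hderiv : ∀ x ∈ Ici s, HasDerivAt (fun t => -(Real.exp (-c * t) / c))
      (Real.exp (-c * x)) x := by
    intro x _
    have h1 : HasDerivAt (fun t : ℝ => -c * t) (-c) x := by
      simpa using (hasDerivAt_id x).const_mul (-c)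
    have h2 := ((h1.exp).div_const c).neg
    convert h2 using 1
    all_goals first | rfl | field_simp
  have htend : Tendsto (fun t => -(Real.exp (-c * t) / c)) atTop (nhds 0) := by
    have h1 : Tendsto (fun t : ℝ => c * t) atTop atTop :=
      tendsto_id.const_mul_atTop hc
    have h2 : Tendsto (fun t : ℝ => Real.exp (-(c * t))) atTop (nhds 0) :=
      Real.tendsto_exp_neg_atTop_nhds_zero.comp h1
    have h3 : Tendsto (fun t : ℝ => -(Real.exp (-(c * t)) / c)) atTop (nhds (-(0 / c))) :=
      (h2.div_const c).neg
    simpa [neg_mul] using h3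
  have := integral_Ioi_of_hasDerivAt_of_tendsto' hderiv
    (exp_neg_integrableOn_Ioi s hc) htend
  rw [this]; ring

set_option maxHeartbeats 1000000 in
/-- Lower bound for discounted actions in a metric space: if `𝒱 x ≤ α d(x,ϱ)^p + β`
with `p (2p/δ)^p α < 1`, and `σ` is a curve with measurable speed `g` of finite
discounted kinetic energy, then
`∫_0^∞ e^{-δt}(g^p/p - 𝒱(σ)) dt ≥ -(1/δ)(β + 2^p α d(σ(0),ϱ)^p)`. -/
theorem action_lower_bound {X : Type*} [MetricSpace X] (p δ α β : ℝ)
    (hp : 1 < p) (hδ : 0 < δ) (hα : 0 ≤ α)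
    (hsmall : p * (2 * p / δ) ^ p * α < 1)
    (𝒱 : X → ℝ) (ϱ : X)
    (hV : ∀ x, 𝒱 x ≤ α * dist x ϱ ^ p + β)
    (σ : ℝ → X) (g : ℝ → ℝ) (hgm : Measurable g) (hg0 : ∀ t, 0 ≤ g t)
    (hgi : ∀ s t : ℝ, 0 ≤ s → s ≤ t → IntervalIntegrable g volume s t)
    (hcurve : ∀ s t : ℝ, 0 ≤ s → s ≤ t → dist (σ s) (σ t) ≤ ∫ r in s..t, g r)
    (hgp : Integrable (fun t => Real.exp (-δ * t) * g t ^ p)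
      (volume.restrict (Set.Ioi 0)))
    (hint : IntegrableOn
      (fun t => Real.exp (-δ * t) * ((1/p) * g t ^ p - 𝒱 (σ t))) (Set.Ioi 0)) :
    (∫ t in Set.Ioi (0:ℝ), Real.exp (-δ * t) * ((1/p) * g t ^ p - 𝒱 (σ t)))
      ≥ -(1/δ) * (β + 2 ^ p * α * dist (σ 0) ϱ ^ p) := by
  have hp0 : 0 < p := zero_lt_one.trans hp
  have hpne : p ≠ 0 := ne_of_gt hp0
  have hp1ne : p - 1 ≠ 0 := sub_ne_zero.2 (ne_of_gt hp)
  set D := dist (σ 0) ϱ with hDdef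
  have hD0 : 0 ≤ D := dist_nonneg
  set r := δ / p with hrdef
  have hr0 : 0 < r := div_pos hδ hp0
  have hδr : 0 < δ - r := by
    have := div_lt_self hδ hp
    rw [hrdef]; linarith
  set q := p / (p - 1) with hqdef
  have hpq : p.HolderConjugate q := Real.HolderConjugate.conjExponent hp
  have hq0 : 0 < q := hpq.symm.pos
  -- the modified speed, vanishing on nonpositive times
  set g' : ℝ → ℝ := (Set.Ioi (0:ℝ)).indicator g with hg'def
  have hg'm : Measurable g' := hgm.indicator measurableSet_Ioi
  have hg'0 : ∀ s, 0 ≤ g' s := fun s => Set.indicator_nonneg (fun x _ => hg0 x) s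
  have hg'i : ∀ u v : ℝ, IntervalIntegrable g' volume u v := by
    have key : ∀ u v : ℝ, u ≤ v → IntervalIntegrable g' volume u v := by
      intro u v huv
      rw [intervalIntegrable_iff_integrableOn_Ioc_of_le huv]
      have h1 : IntegrableOn g (Set.Ioc 0 (max v 0)) volume := by
        have := hgi 0 (max v 0) le_rfl (le_max_right _ _)
        rwa [intervalIntegrable_iff_integrableOn_Ioc_of_le (le_max_right _ _)] at this
      have h2 : IntegrableOn g (Set.Ioi 0 ∩ Set.Ioc u v) volume := by
        apply h1.mono_set
        rintro x ⟨hx1, hx2⟩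
        exact ⟨hx1, le_trans hx2.2 (le_max_left _ _)⟩
      rw [IntegrableOn, hg'def, integrable_indicator_iff measurableSet_Ioi]
      rwa [IntegrableOn, Measure.restrict_restrict measurableSet_Ioi] 
    intro u v
    rcases le_total u v with h | h
    · exact key u v h
    · exact (key v u h).symm
  -- the primitive of g'
  set F : ℝ → ℝ := fun t => ∫ s in (0:ℝ)..t, g' s with hFdef
  have hFc : Continuous F := intervalIntegral.continuous_primitive hg'i 0
  have hF0 : ∀ t, 0 ≤ t → 0 ≤ F t := fun t ht =>
    intervalIntegral.integral_nonneg ht (fun x _ => hg'0 x)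
  have hFIoc : ∀ t : ℝ, 0 ≤ t → F t = ∫ s in Set.Ioc 0 t, g' s := fun t ht =>
    intervalIntegral.integral_of_le ht
  have hdist : ∀ t, 0 ≤ t → dist (σ t) (σ 0) ≤ F t := by
    intro t ht
    have h1 := hcurve 0 t le_rfl ht
    have h2 : (∫ u in (0:ℝ)..t, g u) = F t := by
      rw [intervalIntegral.integral_of_le ht, hFIoc t ht]
      apply setIntegral_congr_fun measurableSet_Ioc
      intro x hx
      exact (Set.indicator_of_mem (Set.mem_Ioi.2 hx.1) g).symm
    rw [dist_comm]
    exact h1.trans (le_of_eq h2)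
  -- lintegral setup
  set W : ℝ → ℝ≥0∞ := fun s => ENNReal.ofReal (Real.exp (-(δ-r) * s) * g' s ^ p) with hWdef
  have hWm : Measurable W := by
    rw [hWdef]; fun_prop
  set L : ℝ≥0∞ := ∫⁻ s in Set.Ioi (0:ℝ), ENNReal.ofReal (Real.exp (-δ * s) * g' s ^ p) with hLdef
  set I : ℝ := ∫ t in Set.Ioi (0:ℝ), Real.exp (-δ * t) * g t ^ p with hIdef
  have hI0 : 0 ≤ I := setIntegral_nonneg measurableSet_Ioi
    (fun t _ => mul_nonneg (Real.exp_nonneg _) (Real.rpow_nonneg (hg0 t) p))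
  have hLI : L = ENNReal.ofReal I := by
    rw [hLdef, hIdef, ofReal_integral_eq_lintegral_ofReal hgp
      (ae_of_all _ fun t => mul_nonneg (Real.exp_nonneg _) (Real.rpow_nonneg (hg0 t) p))]
    apply setLIntegral_congr_fun measurableSet_Ioi
    intro x hx
    dsimp only
    rw [hg'def, Set.indicator_of_mem hx]
  set A : ℝ → ℝ≥0∞ := fun t => ∫⁻ s in Set.Ioc (0:ℝ) t, W s with hAdef
  set a := (δ - r) / p with hadef
  have hap : a * p = δ - r := div_mul_cancel₀ _ hpne
  have haq : a * q = r := by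
    rw [hadef, hqdef, hrdef]
    field_simp
  -- the pointwise Hölder estimate
  have key : ∀ t : ℝ, t ∈ Set.Ioi (0:ℝ) →
      ENNReal.ofReal (Real.exp (-δ * t) * F t ^ p) ≤
        ENNReal.ofReal (Real.exp (-r * t) * r ^ (1 - p)) * A t := by
    intro t ht
    rw [Set.mem_Ioi] at ht
    set μt := volume.restrict (Set.Ioc (0:ℝ) t) with hμt
    have hf1 : AEMeasurable (fun s => ENNReal.ofReal (Real.exp (-a * s) * g' s)) μt := by
      fun_prop
    have hf2 : AEMeasurable (fun s => ENNReal.ofReal (Real.exp (a * s))) μt := by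
      fun_prop
    have hold := ENNReal.lintegral_mul_le_Lp_mul_Lq μt hpq hf1 hf2
    have hprod : ∀ s, ENNReal.ofReal (Real.exp (-a * s) * g' s) *
        ENNReal.ofReal (Real.exp (a * s)) = ENNReal.ofReal (g' s) := by
      intro s
      rw [← ENNReal.ofReal_mul (mul_nonneg (Real.exp_nonneg _) (hg'0 s))]
      congr 1
      rw [mul_right_comm, ← Real.exp_add]
      simp
    have hFint : IntegrableOn g' (Set.Ioc 0 t) volume := by
      have := hg'i 0 t
      rwa [intervalIntegrable_iff_integrableOn_Ioc_of_le ht.le] at this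
    have hLHS : (∫⁻ s, ((fun s => ENNReal.ofReal (Real.exp (-a * s) * g' s)) *
        (fun s => ENNReal.ofReal (Real.exp (a * s)))) s ∂μt) = ENNReal.ofReal (F t) := by
      calc (∫⁻ s, ((fun s => ENNReal.ofReal (Real.exp (-a * s) * g' s)) *
            (fun s => ENNReal.ofReal (Real.exp (a * s)))) s ∂μt)
          = ∫⁻ s, ENNReal.ofReal (g' s) ∂μt := lintegral_congr hprod
        _ = ENNReal.ofReal (∫ s in Set.Ioc (0:ℝ) t, g' s) :=
            (ofReal_integral_eq_lintegral_ofReal hFint (ae_of_all _ hg'0)).symm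
        _ = ENNReal.ofReal (F t) := by rw [← hFIoc t ht.le]
    have hf1p : ∀ s, ENNReal.ofReal (Real.exp (-a * s) * g' s) ^ p = W s := by
      intro s
      rw [ENNReal.ofReal_rpow_of_nonneg (mul_nonneg (Real.exp_nonneg _) (hg'0 s)) hp0.le, hWdef]
      congr 1
      rw [Real.mul_rpow (Real.exp_nonneg _) (hg'0 s), ← Real.exp_mul]
      congr 2
      rw [← hap]; ring
    have hf2q : ∀ s, ENNReal.ofReal (Real.exp (a * s)) ^ q
        = ENNReal.ofReal (Real.exp (r * s)) := by
      intro s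
      rw [ENNReal.ofReal_rpow_of_nonneg (Real.exp_nonneg _) hq0.le]
      congr 1
      rw [← Real.exp_mul]
      congr 1
      rw [← haq]; ring
    have hexpc : Continuous fun s : ℝ => Real.exp (r * s) := by fun_prop
    have hexpint : IntegrableOn (fun s : ℝ => Real.exp (r * s)) (Set.Ioc 0 t) volume :=
      hexpc.integrableOn_Ioc
    have hBval : (∫ s in Set.Ioc (0:ℝ) t, Real.exp (r * s)) ≤ Real.exp (r * t) / r := by
      have heq : (∫ s in Set.Ioc (0:ℝ) t, Real.exp (r * s))
          = (Real.exp (r * t) - 1) / r := by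
        rw [← intervalIntegral.integral_of_le ht.le]
        have hd : ∀ x ∈ Set.uIcc (0:ℝ) t,
            HasDerivAt (fun u => Real.exp (r * u) / r) (Real.exp (r * x)) x := by
          intro x _
          have h1 : HasDerivAt (fun u : ℝ => r * u) r x := by
            simpa using (hasDerivAt_id x).const_mul r
          have h2 := (h1.exp).div_const r
          convert h2 using 1
          all_goals first | rfl | field_simp
        rw [intervalIntegral.integral_eq_sub_of_hasDerivAt hd
          (hexpc.intervalIntegrable 0 t)]
        simp [Real.exp_zero]
        ring
      rw [heq]
      have : Real.exp (r * t) - 1 ≤ Real.exp (r * t) := by linarith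
      gcongr
    have step : ENNReal.ofReal (F t) ≤
        (A t) ^ (1/p) * ENNReal.ofReal (Real.exp (r * t) / r) ^ (1/q) := by
      rw [← hLHS]
      refine hold.trans ?_
      have e1 : (∫⁻ s, ENNReal.ofReal (Real.exp (-a * s) * g' s) ^ p ∂μt) = A t :=
        lintegral_congr hf1p
      have e2 : (∫⁻ s, ENNReal.ofReal (Real.exp (a * s)) ^ q ∂μt)
          ≤ ENNReal.ofReal (Real.exp (r * t) / r) := by
        calc (∫⁻ s, ENNReal.ofReal (Real.exp (a * s)) ^ q ∂μt)
            = ∫⁻ s, ENNReal.ofReal (Real.exp (r * s)) ∂μt := lintegral_congr hf2q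
          _ = ENNReal.ofReal (∫ s in Set.Ioc (0:ℝ) t, Real.exp (r * s)) :=
              (ofReal_integral_eq_lintegral_ofReal hexpint
                (ae_of_all _ fun s => Real.exp_nonneg _)).symm
          _ ≤ ENNReal.ofReal (Real.exp (r * t) / r) := ENNReal.ofReal_le_ofReal hBval
      rw [e1]
      exact mul_le_mul_right (ENNReal.rpow_le_rpow e2 (by positivity)) _
    have hqp : (1/q) * p = p - 1 := by
      rw [hqdef]
      field_simp
    have step2 : ENNReal.ofReal (F t) ^ p ≤
        A t * ENNReal.ofReal (Real.exp (r * t) / r) ^ (p - 1) := by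
      calc ENNReal.ofReal (F t) ^ p
          ≤ ((A t) ^ (1/p) * ENNReal.ofReal (Real.exp (r * t) / r) ^ (1/q)) ^ p :=
            ENNReal.rpow_le_rpow step hp0.le
        _ = A t * ENNReal.ofReal (Real.exp (r * t) / r) ^ (p - 1) := by
            rw [ENNReal.mul_rpow_of_nonneg _ _ hp0.le, ← ENNReal.rpow_mul,
              ← ENNReal.rpow_mul, one_div_mul_cancel hpne, ENNReal.rpow_one, hqp]
    have hre : Real.exp (-δ * t) * (Real.exp (r * t) / r) ^ (p - 1)
        = Real.exp (-r * t) * r ^ (1 - p) := by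
      rw [Real.div_rpow (Real.exp_nonneg _) hr0.le, ← Real.exp_mul,
        show (1:ℝ) - p = -(p - 1) by ring, Real.rpow_neg hr0.le,
        div_eq_mul_inv, ← mul_assoc, ← Real.exp_add]
      congr 2
      have hrp1 : r * (p - 1) = δ - r := by
        rw [hrdef]; field_simp
      linear_combination t * hrp1
    calc ENNReal.ofReal (Real.exp (-δ * t) * F t ^ p)
        = ENNReal.ofReal (Real.exp (-δ * t)) * ENNReal.ofReal (F t) ^ p := by
          rw [ENNReal.ofReal_rpow_of_nonneg (hF0 t ht.le) hp0.le,
            ← ENNReal.ofReal_mul (Real.exp_nonneg _)]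
      _ ≤ ENNReal.ofReal (Real.exp (-δ * t)) *
          (A t * ENNReal.ofReal (Real.exp (r * t) / r) ^ (p - 1)) :=
          mul_le_mul_right step2 _
      _ = ENNReal.ofReal (Real.exp (-r * t) * r ^ (1 - p)) * A t := by
          rw [ENNReal.ofReal_rpow_of_nonneg (by positivity) (by linarith : (0:ℝ) ≤ p - 1),
            ← mul_assoc, mul_comm (ENNReal.ofReal (Real.exp (-δ * t))),
            mul_comm _ (A t), mul_assoc,
            ← ENNReal.ofReal_mul (Real.exp_nonneg _), hre, mul_comm (A t)]
  -- integrate the Hölder estimate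
  have main1 : (∫⁻ t in Set.Ioi (0:ℝ), ENNReal.ofReal (Real.exp (-δ * t) * F t ^ p)) ≤
      ENNReal.ofReal (r ^ (1 - p)) *
        ∫⁻ t in Set.Ioi (0:ℝ), ENNReal.ofReal (Real.exp (-r * t)) * A t := by
    calc (∫⁻ t in Set.Ioi (0:ℝ), ENNReal.ofReal (Real.exp (-δ * t) * F t ^ p))
        ≤ ∫⁻ t in Set.Ioi (0:ℝ), ENNReal.ofReal (Real.exp (-r * t) * r ^ (1 - p)) * A t :=
          lintegral_mono_ae ((ae_restrict_iff' measurableSet_Ioi).2 (ae_of_all _ key))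
      _ = _ := by
          rw [← lintegral_const_mul' _ _ ENNReal.ofReal_ne_top]
          apply lintegral_congr
          intro t
          rw [ENNReal.ofReal_mul (Real.exp_nonneg _)]
          ring
  -- Fubini computation
  have hfub : (∫⁻ t in Set.Ioi (0:ℝ), ENNReal.ofReal (Real.exp (-r * t)) * A t)
      = ENNReal.ofReal (1/r) * L := by
    have hKm : Measurable (fun z : ℝ × ℝ =>
        if z.2 ≤ z.1 then ENNReal.ofReal (Real.exp (-r * z.1)) * W z.2 else 0) := by
      apply Measurable.ite (measurableSet_le measurable_snd measurable_fst)
      · exact ((Real.measurable_exp.comp (measurable_fst.const_mul _)).ennreal_ofReal).mul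
          (hWm.comp measurable_snd)
      · exact measurable_const
    have hA1 : ∀ t : ℝ, t ∈ Set.Ioi (0:ℝ) →
        ENNReal.ofReal (Real.exp (-r * t)) * A t
          = ∫⁻ s in Set.Ioi (0:ℝ),
              (if s ≤ t then ENNReal.ofReal (Real.exp (-r * t)) * W s else 0) := by
      intro t ht
      have h1 : (fun s => if s ≤ t then ENNReal.ofReal (Real.exp (-r * t)) * W s else 0)
          = (Set.Iic t).indicator (fun s => ENNReal.ofReal (Real.exp (-r * t)) * W s) := by
        funext s
        simp [Set.indicator_apply, Set.mem_Iic]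
      rw [h1, lintegral_indicator measurableSet_Iic,
        Measure.restrict_restrict measurableSet_Iic, Set.Iic_inter_Ioi,
        lintegral_const_mul' _ _ ENNReal.ofReal_ne_top]
    have hA2 : ∀ s : ℝ, s ∈ Set.Ioi (0:ℝ) →
        (∫⁻ t in Set.Ioi (0:ℝ),
            (if s ≤ t then ENNReal.ofReal (Real.exp (-r * t)) * W s else 0))
          = ENNReal.ofReal (1/r) * ENNReal.ofReal (Real.exp (-δ * s) * g' s ^ p) := by
      intro s hs
      have h1 : (fun t => if s ≤ t then ENNReal.ofReal (Real.exp (-r * t)) * W s else 0)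
          = (Set.Ici s).indicator (fun t => ENNReal.ofReal (Real.exp (-r * t)) * W s) := by
        funext u
        simp [Set.indicator_apply, Set.mem_Ici]
      rw [h1, lintegral_indicator measurableSet_Ici,
        Measure.restrict_restrict measurableSet_Ici]
      have h2 : Set.Ici s ∩ Set.Ioi (0:ℝ) = Set.Ici s :=
        Set.inter_eq_left.2 (fun x hx => Set.mem_Ioi.2 (lt_of_lt_of_le hs hx))
      rw [h2, ← Measure.restrict_congr_set (Ioi_ae_eq_Ici (a := s)),
        lintegral_mul_const' _ _ ENNReal.ofReal_ne_top,
        ← ofReal_integral_eq_lintegral_ofReal (exp_neg_integrableOn_Ioi s hr0)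
          (ae_of_all _ fun x => Real.exp_nonneg _),
        int_exp_neg_Ioi hr0 s]
      rw [← ENNReal.ofReal_mul (by positivity), ← ENNReal.ofReal_mul (by positivity)]
      congr 1
      have he : Real.exp (-r * s) * Real.exp (-(δ - r) * s) = Real.exp (-δ * s) := by
        rw [← Real.exp_add]; congr 1; ring
      rw [← he]; ring
    have hswap := lintegral_lintegral_swap
      (μ := volume.restrict (Set.Ioi (0:ℝ))) (ν := volume.restrict (Set.Ioi (0:ℝ)))
      (f := fun t s => if s ≤ t then ENNReal.ofReal (Real.exp (-r * t)) * W s else 0)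
      hKm.aemeasurable
    calc (∫⁻ t in Set.Ioi (0:ℝ), ENNReal.ofReal (Real.exp (-r * t)) * A t)
        = ∫⁻ t in Set.Ioi (0:ℝ), ∫⁻ s in Set.Ioi (0:ℝ),
            (if s ≤ t then ENNReal.ofReal (Real.exp (-r * t)) * W s else 0) :=
          setLIntegral_congr_fun measurableSet_Ioi hA1
      _ = ∫⁻ s in Set.Ioi (0:ℝ), ∫⁻ t in Set.Ioi (0:ℝ),
            (if s ≤ t then ENNReal.ofReal (Real.exp (-r * t)) * W s else 0) := hswap
      _ = ∫⁻ s in Set.Ioi (0:ℝ),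
            ENNReal.ofReal (1/r) * ENNReal.ofReal (Real.exp (-δ * s) * g' s ^ p) :=
          setLIntegral_congr_fun measurableSet_Ioi hA2
      _ = ENNReal.ofReal (1/r) * L := by
          rw [lintegral_const_mul' _ _ ENNReal.ofReal_ne_top, hLdef]
  -- the weighted Poincaré inequality
  have hPoin : (∫⁻ t in Set.Ioi (0:ℝ), ENNReal.ofReal (Real.exp (-δ * t) * F t ^ p))
      ≤ ENNReal.ofReal ((p/δ) ^ p * I) := by
    refine main1.trans ?_
    rw [hfub, hLI, ← mul_assoc,
      ← ENNReal.ofReal_mul (Real.rpow_nonneg hr0.le _),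
      ← ENNReal.ofReal_mul (by positivity)]
    apply ENNReal.ofReal_le_ofReal
    have hconst : r ^ (1 - p) * (1/r) = (p/δ) ^ p := by
      rw [one_div, ← Real.rpow_neg_one r, ← Real.rpow_add hr0,
        show (1 - p) + (-1) = -p by ring, Real.rpow_neg hr0.le, hrdef,
        ← Real.inv_rpow (div_nonneg hδ.le hp0.le), inv_div]
    rw [hconst]
  -- integrability and the real Poincaré bound
  set Φ : ℝ → ℝ := fun t => Real.exp (-δ * t) * F t ^ p with hΦdef
  have hΦc : Continuous Φ := by
    rw [hΦdef]
    exact (Real.continuous_exp.comp (by fun_prop)).mul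
      (hFc.rpow_const (fun x => Or.inr hp0.le))
  have hΦae : 0 ≤ᵐ[volume.restrict (Set.Ioi (0:ℝ))] Φ :=
    (ae_restrict_iff' measurableSet_Ioi).2 (ae_of_all _ fun t ht =>
      mul_nonneg (Real.exp_nonneg _) (Real.rpow_nonneg (hF0 t (le_of_lt ht)) _))
  have hΦint : IntegrableOn Φ (Set.Ioi (0:ℝ)) volume := by
    constructor
    · exact hΦc.aestronglyMeasurable.restrict
    · rw [hasFiniteIntegral_iff_ofReal hΦae]
      exact lt_of_le_of_lt hPoin ENNReal.ofReal_lt_top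
  set J : ℝ := ∫ t in Set.Ioi (0:ℝ), Φ t with hJdef
  have hJle : J ≤ (p/δ) ^ p * I := by
    have h1 := ofReal_integral_eq_lintegral_ofReal hΦint hΦae
    have h2 : ENNReal.ofReal J ≤ ENNReal.ofReal ((p/δ) ^ p * I) := by
      rw [hJdef, h1]; exact hPoin
    exact (ENNReal.ofReal_le_ofReal_iff
      (mul_nonneg (Real.rpow_nonneg (by positivity) p) hI0)).1 h2
  -- final comparison
  set c : ℝ := β + 2 ^ p * α * D ^ p with hcdef
  have hE : (∫ t in Set.Ioi (0:ℝ), Real.exp (-δ * t)) = 1/δ := by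
    have := int_exp_neg_Ioi hδ 0
    simpa [one_div] using this
  set h : ℝ → ℝ := fun t => (1/p) * (Real.exp (-δ * t) * g t ^ p)
    - (2 ^ p * α) * Φ t - c * Real.exp (-δ * t) with hhdef
  have hh1 : Integrable (fun t => (1/p) * (Real.exp (-δ * t) * g t ^ p))
      (volume.restrict (Set.Ioi (0:ℝ))) := hgp.const_mul _
  have hh2 : Integrable (fun t => (2 ^ p * α) * Φ t)
      (volume.restrict (Set.Ioi (0:ℝ))) := hΦint.const_mul _
  have hh3 : Integrable (fun t => c * Real.exp (-δ * t))
      (volume.restrict (Set.Ioi (0:ℝ))) := (exp_neg_integrableOn_Ioi 0 hδ).const_mul c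
  have hh_int : IntegrableOn h (Set.Ioi (0:ℝ)) volume := ((hh1.sub hh2).sub hh3)
  have hmono : (∫ t in Set.Ioi (0:ℝ), h t)
      ≤ ∫ t in Set.Ioi (0:ℝ), Real.exp (-δ * t) * ((1/p) * g t ^ p - 𝒱 (σ t)) := by
    apply setIntegral_mono_on hh_int hint measurableSet_Ioi
    intro t ht
    rw [Set.mem_Ioi] at ht
    clear_value h Φ c F
    have hds : dist (σ t) ϱ ≤ F t + D := by
      calc dist (σ t) ϱ ≤ dist (σ t) (σ 0) + D := dist_triangle _ _ _
        _ ≤ F t + D := by linarith [hdist t ht.le]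
    have hFtnn : 0 ≤ F t := hF0 t ht.le
    have hdp : dist (σ t) ϱ ^ p ≤ 2 ^ p * (F t ^ p + D ^ p) := by
      have h1 : dist (σ t) ϱ ^ p ≤ (F t + D) ^ p :=
        Real.rpow_le_rpow dist_nonneg hds hp0.le
      rcases le_total (F t) D with hc' | hc'
      · have h2 : (F t + D) ^ p ≤ (2 * D) ^ p :=
          Real.rpow_le_rpow (by linarith) (by linarith) hp0.le
        have h3 : (2 * D) ^ p = 2 ^ p * D ^ p :=
          Real.mul_rpow (by norm_num) hD0
        have h4 : 0 ≤ F t ^ p := Real.rpow_nonneg hFtnn p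
        have h5 : (0:ℝ) ≤ 2 ^ p := Real.rpow_nonneg (by norm_num) p
        nlinarith
      · have h2 : (F t + D) ^ p ≤ (2 * F t) ^ p :=
          Real.rpow_le_rpow (by linarith) (by linarith) hp0.le
        have h3 : (2 * F t) ^ p = 2 ^ p * F t ^ p :=
          Real.mul_rpow (by norm_num) hFtnn
        have h4 : 0 ≤ D ^ p := Real.rpow_nonneg hD0 p
        have h5 : (0:ℝ) ≤ 2 ^ p := Real.rpow_nonneg (by norm_num) p
        nlinarith
    have hVt := hV (σ t)
    have h6 : α * (dist (σ t) ϱ ^ p) ≤ α * (2 ^ p * (F t ^ p + D ^ p)) :=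
      mul_le_mul_of_nonneg_left hdp hα
    have h7 : α * (2 ^ p * (F t ^ p + D ^ p))
        = 2 ^ p * α * F t ^ p + 2 ^ p * α * D ^ p := by ring
    have h8 : 𝒱 (σ t) ≤ 2 ^ p * α * F t ^ p + c := by
      rw [hcdef]; rw [h7] at h6; linarith
    have hexp : 0 ≤ Real.exp (-δ * t) := Real.exp_nonneg _
    have hkey : Real.exp (-δ * t) * ((1/p) * g t ^ p - 𝒱 (σ t)) - h t
        = Real.exp (-δ * t) * (2 ^ p * α * F t ^ p + c - 𝒱 (σ t)) := by
      rw [hhdef, hΦdef]; ring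
    have hnn : 0 ≤ Real.exp (-δ * t) * (2 ^ p * α * F t ^ p + c - 𝒱 (σ t)) :=
      mul_nonneg hexp (by linarith)
    linarith [hkey, hnn]
  have hsplit : (∫ t in Set.Ioi (0:ℝ), h t) = (1/p) * I - (2 ^ p * α) * J - c * (1/δ) := by
    have hh12 : Integrable (fun t => (1/p) * (Real.exp (-δ * t) * g t ^ p)
        - (2 ^ p * α) * Φ t) (volume.restrict (Set.Ioi (0:ℝ))) := hh1.sub hh2
    simp only [hhdef]
    rw [integral_sub hh12 hh3, integral_sub hh1 hh2,
      integral_const_mul, integral_const_mul, integral_const_mul, hE, ← hIdef, ← hJdef]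
  have hcoef : 2 ^ p * α * (p/δ) ^ p ≤ 1/p := by
    have h1 : (2 * p / δ) ^ p = 2 ^ p * (p/δ) ^ p := by
      rw [show 2 * p / δ = 2 * (p/δ) by ring,
        Real.mul_rpow (by norm_num) (div_nonneg hp0.le hδ.le)]
    rw [h1] at hsmall
    rw [le_div_iff₀ hp0]
    nlinarith
  have hJ2 : (2 ^ p * α) * J ≤ (2 ^ p * α) * ((p/δ) ^ p * I) :=
    mul_le_mul_of_nonneg_left hJle
      (mul_nonneg (Real.rpow_nonneg (by norm_num) p) hα)
  have hfin : (1/p) * I - (2 ^ p * α) * ((p/δ) ^ p * I) - c * (1/δ) ≥ -(1/δ) * c := by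
    have h1 : 2 ^ p * α * (p/δ) ^ p * I ≤ (1/p) * I :=
      mul_le_mul_of_nonneg_right hcoef hI0
    nlinarith
  calc (∫ t in Set.Ioi (0:ℝ), Real.exp (-δ * t) * ((1/p) * g t ^ p - 𝒱 (σ t)))
      ≥ ∫ t in Set.Ioi (0:ℝ), h t := hmono
    _ = (1/p) * I - (2 ^ p * α) * J - c * (1/δ) := hsplit
    _ ≥ (1/p) * I - (2 ^ p * α) * ((p/δ) ^ p * I) - c * (1/δ) := by linarith
    _ ≥ -(1/δ) * c := hfin
end
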